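/- arXiv:1812.01864 — 3 statements merged into one kernel-verified Lean document; each statement's English description precedes it below -/
import Mathlib

section
/- For every n ≥ 0, the identity ∑_{λ ⊢ n} F_λ · s_λ = h_1^n holds in the ring of symmetric functions, where F_λ is the number of standard Young tableaux of shape λ. -/
open scoped BigOperators

noncomputable section

namespace WAPpr

/-- A partition, represented as a finitely supported function `ℕ →₀ ℕ`
(0-indexed: `lam i` is the `(i+1)`-st part). -/
abbrev Ptn := ℕ →₀ ℕ

/-- `f` is a genuine partition: the parts are weakly decreasing. -/
def IsPtn (f : Ptn) : Prop := ∀ ⦃i j : ℕ⦄, i ≤ j → f j ≤ f i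

/-- The size `|λ|` of a partition. -/
def psize (f : Ptn) : ℕ := f.sum fun _ m => m

/-- The length (number of nonzero parts) of a partition. -/
def plen (f : Ptn) : ℕ := f.support.card

/-- `λ` covers `μ` in Young's lattice. -/
def Covers (lam mu : Ptn) : Prop :=
  IsPtn lam ∧ IsPtn mu ∧ (∀ i, mu i ≤ lam i) ∧ psize mu + 1 = psize lam

/-- The number of standard Young tableaux of shape `λ`, i.e. of saturated
chains from `∅` to `λ` in Young's lattice. -/
def F (lam : Ptn) : ℕ :=
  Nat.card {T : Fin (psize lam + 1) → Ptn //
    T 0 = 0 ∧ T (Fin.last (psize lam)) = lam ∧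
    ∀ i : Fin (psize lam), Covers (T i.succ) (T i.castSucc)}

/-- `conjF lam j` is the number of parts of `lam` that are `> j`,
i.e. the `(j+1)`-st part of the conjugate partition. -/
def conjF (lam : Ptn) (j : ℕ) : ℕ := (lam.support.filter fun i => j < lam i).card

/-- The cells of the Young diagram of `λ` (0-indexed). -/
def cells (lam : Ptn) : Finset (ℕ × ℕ) :=
  lam.support.biUnion fun i => ({i} : Finset ℕ) ×ˢ Finset.range (lam i)

/-- The hook length of the (0-indexed) cell `(i,j)` of `λ`. -/
def hook (lam : Ptn) (i j : ℕ) : ℕ := lam i + conjF lam j - i - j - 1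

/-- The hook length product `H(λ)`. -/
def hookProd (lam : Ptn) : ℕ := ∏ c ∈ cells lam, hook lam c.1 c.2

/-- The degree vector `n_λ = (λ_r, λ_{r-1}+1, …, λ_1+r-1)` (0-indexed). -/
def degv (lam : Ptn) (i : ℕ) : ℕ := lam (plen lam - 1 - i) + i

/-- The Vandermonde factor `Δ(n_λ) = ∏_{i<j} (n_j - n_i)`. -/
def vand (lam : Ptn) : ℝ :=
  ∏ p ∈ (Finset.range (plen lam) ×ˢ Finset.range (plen lam)).filter
      (fun p => p.1 < p.2),
    ((degv lam p.2 : ℝ) - (degv lam p.1 : ℝ))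

/-- The Wronskian determinant of `r` polynomials. -/
def wronskian (r : ℕ) (f : ℕ → Polynomial ℝ) : Polynomial ℝ :=
  Matrix.det (Matrix.of fun i j : Fin r =>
    (fun q => Polynomial.derivative q)^[(j : ℕ)] (f (i : ℕ)))

/-- The Wronskian Appell polynomial `A_λ = Wr[A_{n_1},…,A_{n_r}] / Δ(n_λ)`. -/
def wap (A : ℕ → Polynomial ℝ) (lam : Ptn) : Polynomial ℝ :=
  (vand lam)⁻¹ • wronskian (plen lam) (fun i => A (degv lam i))

/-- `(A_n)` is an Appell sequence: `A_0 = 1` and `A_n' = n·A_{n-1}`. -/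
def IsAppell (A : ℕ → Polynomial ℝ) : Prop :=
  A 0 = 1 ∧ ∀ n : ℕ, 1 ≤ n → Polynomial.derivative (A n) = n • A (n - 1)

/-- The set of cells of the skew diagram `λ/μ`. -/
def skewSet (lam mu : Ptn) : Set (ℕ × ℕ) := {p | mu p.1 ≤ p.2 ∧ p.2 < lam p.1}

/-- Two cells are adjacent (share an edge). -/
def Adj (p q : ℕ × ℕ) : Prop :=
  (p.1 = q.1 ∧ (p.2 + 1 = q.2 ∨ q.2 + 1 = p.2)) ∨
  (p.2 = q.2 ∧ (p.1 + 1 = q.1 ∨ q.1 + 1 = p.1))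

/-- A set of cells is (edge-)connected. -/
def ConnectedIn (S : Set (ℕ × ℕ)) : Prop :=
  ∀ a b : S, Relation.ReflTransGen (fun x y : S => Adj x.1 y.1) a b

/-- A set of cells contains no 2×2 square. -/
def No2x2 (S : Set (ℕ × ℕ)) : Prop :=
  ¬ ∃ i j : ℕ, (i, j) ∈ S ∧ (i + 1, j) ∈ S ∧ (i, j + 1) ∈ S ∧ (i + 1, j + 1) ∈ S

/-- `λ/μ` is a rim hook of size `k`. -/
def IsRimHook (lam mu : Ptn) (k : ℕ) : Prop :=
  IsPtn lam ∧ IsPtn mu ∧ (∀ i, mu i ≤ lam i) ∧ psize mu + k = psize lam ∧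
  ConnectedIn (skewSet lam mu) ∧ No2x2 (skewSet lam mu)

/-- The height of the rim hook `λ/μ`: one less than the number of rows. -/
def rhHeight (lam mu : Ptn) : ℕ :=
  Nat.card {i : ℕ | ∃ j, (i, j) ∈ skewSet lam mu} - 1

/-! ### Symmetric functions, `h`-model:
`Λ = ℚ[h_1, h_2, …]` with `X m = h_{m+1}`. -/

abbrev SymF := MvPolynomial ℕ ℚ

/-- The complete homogeneous symmetric function `h_m` (as a free generator). -/
def hsym (m : ℕ) : SymF := if m = 0 then 1 else MvPolynomial.X (m - 1)

/-- `h_k` extended to integer indices by `0` for `k < 0`. -/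
def hz (k : ℤ) : SymF := if k < 0 then 0 else hsym k.toNat

/-- The Schur function `s_λ`, via the Jacobi–Trudi formula
`s_λ = det[h_{λ_i - i + j}]`. -/
def schur (lam : Ptn) : SymF :=
  Matrix.det (Matrix.of fun i j : Fin (plen lam) =>
    hz ((lam (i : ℕ) : ℤ) - (i : ℕ) + (j : ℕ)))

/-! ### Symmetric functions, `p`-model:
`Λ_ℚ = ℚ[p_1, p_2, …]` with `X m = p_{m+1}`. -/

/-- The power sum `p_m` (as a free generator; only used for `m ≥ 1`). -/
def psym (m : ℕ) : SymF := MvPolynomial.X (m - 1)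

/-- The complete homogeneous symmetric functions, expressed in the power
sums via the Newton recursion `n h_n = ∑_{k=1}^n p_k h_{n-k}`. -/
def hh : ℕ → SymF
  | 0 => 1
  | (n + 1) => ((n + 1 : ℚ))⁻¹ • ∑ k ∈ Finset.range (n + 1), psym (k + 1) * hh (n - k)
termination_by n => n
decreasing_by exact Nat.lt_succ_of_le (Nat.sub_le _ _)

/-- `hh` extended to integer indices. -/
def hzP (k : ℤ) : SymF := if k < 0 then 0 else hh k.toNat

/-- The Schur function in the `p`-model, via Jacobi–Trudi. -/
def schurP (lam : Ptn) : SymF :=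
  Matrix.det (Matrix.of fun i j : Fin (plen lam) =>
    hzP ((lam (i : ℕ) : ℤ) - (i : ℕ) + (j : ℕ)))

/-- The elementary symmetric functions in the `p`-model: `e_n = ω(h_n)` where
`ω(p_k) = (-1)^{k-1} p_k`. -/
def ee (n : ℕ) : SymF :=
  MvPolynomial.bind₁ (fun m : ℕ => ((-1 : ℚ) ^ m) • MvPolynomial.X m) (hh n)

/-- The exponential of a power series with coefficients in `Λ_ℚ`
(correct for series with zero constant term). -/
def pexp (S : PowerSeries SymF) : PowerSeries SymF :=
  PowerSeries.mk fun n =>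
    ∑ k ∈ Finset.range (n + 1), (k.factorial : ℚ)⁻¹ • (PowerSeries.coeff n (S ^ k))

/-- The exponential of a real power series (correct for series with zero
constant term). -/
def rexp (S : PowerSeries ℝ) : PowerSeries ℝ :=
  PowerSeries.mk fun n =>
    ∑ k ∈ Finset.range (n + 1), (k.factorial : ℝ)⁻¹ * (PowerSeries.coeff n (S ^ k))

/-- The moment exponential generating function `f_A(t) = ∑ A_k(0) t^k/k!`. -/
def fser (A : ℕ → Polynomial ℝ) : PowerSeries ℝ :=
  PowerSeries.mk fun k => (A k).eval 0 / k.factorial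

/-- The column partition `(1^n)`. -/
def colP (n : ℕ) : Ptn :=
  Finsupp.onFinset (Finset.range n) (fun i => if i < n then 1 else 0)
    (by intro a ha; rw [Finset.mem_range]; by_contra h; simp [h] at ha)

/-- The conjugate partition `λ'`. -/
def conjP (lam : Ptn) : Ptn :=
  Finsupp.onFinset (Finset.range (lam.support.sup fun i => lam i))
    (fun j => conjF lam j)
    (by
      intro a ha
      rw [Finset.mem_range]
      obtain ⟨i, hi⟩ := Finset.card_pos.mp (Nat.pos_of_ne_zero ha)
      rw [Finset.mem_filter] at hi
      exact lt_of_lt_of_le hi.2 (Finset.le_sup hi.1))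

/-! ### Auxiliary development for STATEMENT 8 -/

section Statement8Aux

attribute [local instance] Classical.propDecidable

open Matrix

/-! #### `hz` basics -/

lemma hz_natCast (a : ℕ) : hz (a : ℤ) = hsym a := by
  simp [hz]

lemma hz_neg {k : ℤ} (h : k < 0) : hz k = 0 := if_pos h

/-! #### The basic determinant identity: `∑ i det(M with row i ↦ (M·N)ᵢ) = tr N · det M`. -/

lemma det_aux {m : ℕ} (M N : Matrix (Fin m) (Fin m) SymF) :
    ∑ i, (M.updateRow i fun j => ∑ l, M i l * N l j).det = Matrix.trace N * M.det := by
  have key : ∀ (i : Fin m) (v : Fin m → SymF), (M.updateRow i v).det = Mᵀ.cramer v i := by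
    intro i v
    rw [Matrix.cramer_apply, Matrix.updateCol_transpose, Matrix.det_transpose]
  have hv : ∀ i : Fin m, (fun j => ∑ l, M i l * N l j) = ∑ l, M i l • N l := by
    intro i; funext j
    simp [Finset.sum_apply]
  calc ∑ i, (M.updateRow i fun j => ∑ l, M i l * N l j).det
      = ∑ i, ∑ l, M i l * Mᵀ.cramer (N l) i := by
        refine Finset.sum_congr rfl fun i _ => ?_
        rw [key, hv, map_sum]
        simp [Finset.sum_apply, smul_eq_mul]
    _ = ∑ l, ∑ i, Mᵀ l i * Mᵀ.cramer (N l) i := by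
        rw [Finset.sum_comm]; rfl
    _ = ∑ l, (Mᵀ *ᵥ Mᵀ.cramer (N l)) l := by
        simp [Matrix.mulVec, dotProduct]
    _ = ∑ l, (Mᵀ.det • N l) l := by
        simp only [Matrix.mulVec_cramer]
    _ = Matrix.trace N * M.det := by
        simp only [Pi.smul_apply, smul_eq_mul, Matrix.det_transpose, Matrix.trace, Matrix.diag]
        rw [Finset.sum_mul]
        exact Finset.sum_congr rfl fun l _ => mul_comm _ _

/-! #### Jacobi–Trudi matrices of arbitrary size -/

def JTm (N : ℕ) (mu : Ptn) : Matrix (Fin N) (Fin N) SymF :=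
  Matrix.of fun i j : Fin N => hz ((mu (i : ℕ) : ℤ) - (i : ℕ) + (j : ℕ))

def JTdet (N : ℕ) (mu : Ptn) : SymF := (JTm N mu).det

lemma schur_eq_JTdet (mu : Ptn) : schur mu = JTdet (plen mu) mu := rfl

lemma JTm_last {m : ℕ} {mu : Ptn} (h0 : mu m = 0) :
    JTm (m + 1) mu (Fin.last m) = Pi.single (Fin.last m) 1 := by
  funext j
  rcases eq_or_ne j (Fin.last m) with rfl | hj
  · have h : ((mu ((Fin.last m : ℕ)) : ℤ) - ((Fin.last m : ℕ) : ℕ) + ((Fin.last m : ℕ) : ℕ)) = 0 := by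
      simp [Fin.val_last, h0]
    simp only [JTm, Matrix.of_apply, Pi.single_eq_same]
    rw [Fin.val_last] at *
    simp [h0, hz, hsym]
  · have hjv : (j : ℕ) < m := Fin.val_lt_last hj
    have h : ((mu ((Fin.last m : ℕ)) : ℤ) - ((Fin.last m : ℕ)) + ((j : ℕ) : ℤ)) < 0 := by
      rw [Fin.val_last, h0]
      push_cast
      omega
    simp only [JTm, Matrix.of_apply]
    rw [hz_neg (by exact_mod_cast h), Pi.single_eq_of_ne hj]

/-! #### The key Pieri-type determinant identity -/

lemma star (mu : Ptn) (m : ℕ) (h0 : mu m = 0) :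
    JTdet (m + 1) mu * hsym 1 =
      ∑ k ∈ Finset.range (m + 1), JTdet (m + 1) (mu + Finsupp.single k 1) := by
  set G := JTm (m + 1) mu with hGdef
  have hGlast : G (Fin.last m) = Pi.single (Fin.last m) 1 := JTm_last h0
  set S : Matrix (Fin (m + 1)) (Fin (m + 1)) SymF :=
    Matrix.of fun l j : Fin (m + 1) => if (l : ℕ) = (j : ℕ) + 1 then 1 else 0 with hSdef
  have htr : Matrix.trace S = 0 := by
    simp [Matrix.trace, Matrix.diag, hSdef]
  have hcore := det_aux G S
  rw [htr, zero_mul] at hcore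
  have hw : ∀ (i : Fin (m + 1)) (j : Fin (m + 1)), (∑ l, G i l * S l j) =
      if h : (j : ℕ) + 1 < m + 1 then G i ⟨(j : ℕ) + 1, h⟩ else 0 := by
    intro i j
    by_cases h : (j : ℕ) + 1 < m + 1
    · rw [dif_pos h, Finset.sum_eq_single (⟨(j : ℕ) + 1, h⟩ : Fin (m + 1))]
      · simp [hSdef]
      · intro l _ hl
        have hne : ¬((l : ℕ) = (j : ℕ) + 1) := fun hc => hl (Fin.ext hc)
        simp [hSdef, hne]
      · intro hmem; exact absurd (Finset.mem_univ _) hmem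
    · rw [dif_neg h]
      apply Finset.sum_eq_zero
      intro l _
      have hlt := l.isLt
      have hne : ¬((l : ℕ) = (j : ℕ) + 1) := by omega
      simp [hSdef, hne]
  have hbump : ∀ k : Fin (m + 1),
      JTm (m + 1) (mu + Finsupp.single (k : ℕ) 1) =
      G.updateRow k ((fun j => ∑ l, G k l * S l j) +
        hz ((mu (k : ℕ) : ℤ) + 1 - (k : ℕ) + m) •
          (Pi.single (Fin.last m) 1 : Fin (m + 1) → SymF)) := by
    intro k
    ext i j
    rcases eq_or_ne i k with rfl | hik
    · rw [Matrix.updateRow_self]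
      simp only [Pi.add_apply, Pi.smul_apply, smul_eq_mul]
      rw [hw i j]
      rcases eq_or_ne j (Fin.last m) with rfl | hj
      · rw [dif_neg (by simp [Fin.val_last]), Pi.single_eq_same, mul_one, zero_add]
        simp only [JTm, Matrix.of_apply, Finsupp.add_apply, Finsupp.single_eq_same,
          Fin.val_last]
        congr 1
      · have hjv : (j : ℕ) < m := Fin.val_lt_last hj
        rw [dif_pos (by omega), Pi.single_eq_of_ne hj, mul_zero, add_zero]
        simp only [JTm, Matrix.of_apply, Finsupp.add_apply, Finsupp.single_eq_same, hGdef]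
        congr 1
        push_cast
        ring_nf
    · rw [Matrix.updateRow_ne hik]
      have hne : (k : ℕ) ≠ (i : ℕ) := fun hc => hik (Fin.ext hc.symm)
      simp only [JTm, Matrix.of_apply, Finsupp.add_apply, Finsupp.single_apply,
        if_neg hne, add_zero, hGdef]
  calc G.det * hsym 1
      = ∑ k : Fin (m + 1), JTdet (m + 1) (mu + Finsupp.single (k : ℕ) 1) := by
        have expand : ∀ k : Fin (m + 1),
            JTdet (m + 1) (mu + Finsupp.single (k : ℕ) 1) =
            (G.updateRow k fun j => ∑ l, G k l * S l j).det +
              hz ((mu (k : ℕ) : ℤ) + 1 - (k : ℕ) + m) *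
                (G.updateRow k (Pi.single (Fin.last m) 1)).det := by
          intro k
          rw [JTdet, hbump k, Matrix.det_updateRow_add, Matrix.det_updateRow_smul]
        rw [Finset.sum_congr rfl fun k _ => expand k, Finset.sum_add_distrib, hcore, zero_add]
        rw [Finset.sum_eq_single (Fin.last m)]
        · rw [← hGlast, Matrix.updateRow_eq_self]
          have : hz ((mu ((Fin.last m : ℕ)) : ℤ) + 1 - ((Fin.last m : ℕ)) + m) = hsym 1 := by
            rw [Fin.val_last, h0]
            norm_num
            exact hz_natCast 1
          rw [this, mul_comm]
        · intro k _ hk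
          have hrow : (G.updateRow k (Pi.single (Fin.last m) 1)) k =
              (G.updateRow k (Pi.single (Fin.last m) 1)) (Fin.last m) := by
            rw [Matrix.updateRow_self, Matrix.updateRow_ne (Ne.symm hk), hGlast]
          rw [Matrix.det_zero_of_row_eq hk hrow, mul_zero]
        · intro hmem; exact absurd (Finset.mem_univ _) hmem
    _ = ∑ k ∈ Finset.range (m + 1), JTdet (m + 1) (mu + Finsupp.single k 1) := by
        rw [Finset.sum_range fun k => JTdet (m + 1) (mu + Finsupp.single k 1)]

/-! #### Padding the Jacobi–Trudi determinant -/

lemma JTdet_succ (N : ℕ) (mu : Ptn) (h0 : mu N = 0) : JTdet (N + 1) mu = JTdet N mu := by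
  have hlast : JTm (N + 1) mu (Fin.last N) = Pi.single (Fin.last N) 1 := JTm_last h0
  have hexp : JTdet (N + 1) mu =
      (-1 : SymF) ^ ((Fin.last N : ℕ) + (Fin.last N : ℕ)) *
        JTm (N + 1) mu (Fin.last N) (Fin.last N) *
        ((JTm (N + 1) mu).submatrix (Fin.last N).succAbove (Fin.last N).succAbove).det := by
    rw [JTdet, Matrix.det_succ_row _ (Fin.last N)]
    refine Finset.sum_eq_single (Fin.last N) ?_ ?_
    · intro j _ hj
      rw [hlast, Pi.single_eq_of_ne hj, mul_zero, zero_mul]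
    · intro hmem; exact absurd (Finset.mem_univ _) hmem
  rw [hexp, hlast, Pi.single_eq_same, mul_one, Fin.val_last, ← two_mul, pow_mul, neg_one_sq,
    one_pow, one_mul]
  congr 1
  ext i j
  simp [JTm, Fin.succAbove_last, Matrix.submatrix_apply, Fin.coe_castSucc]

/-! #### Partition basics -/

lemma isPtn_zero : IsPtn (0 : Ptn) := fun _ _ _ => le_rfl

lemma support_eq_range {f : Ptn} (h : IsPtn f) : f.support = Finset.range (plen f) := by
  have hdown : ∀ i j : ℕ, i ≤ j → f j ≠ 0 → f i ≠ 0 := by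
    intro i j hij hj hi
    exact hj (Nat.le_zero.mp (hi ▸ h hij))
  have h1 : ∀ i, f i ≠ 0 → i < plen f := by
    intro i hi
    have hsub : Finset.range (i + 1) ⊆ f.support := by
      intro a ha
      rw [Finset.mem_range] at ha
      rw [Finsupp.mem_support_iff]
      exact hdown a i (by omega) hi
    have := Finset.card_le_card hsub
    simpa [plen] using this
  have h2 : ∀ i, i < plen f → f i ≠ 0 := by
    intro i hi
    by_contra hfi
    have hsub : f.support ⊆ Finset.range i := by
      intro a ha
      rw [Finsupp.mem_support_iff] at ha
      rw [Finset.mem_range]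
      by_contra hai
      have : f a ≤ f i := h (show i ≤ a by omega)
      omega
    have hc : plen f ≤ i := by simpa [plen] using Finset.card_le_card hsub
    omega
  ext a
  rw [Finsupp.mem_support_iff, Finset.mem_range]
  exact ⟨h1 a, h2 a⟩

lemma apply_eq_zero_of_plen_le {f : Ptn} (h : IsPtn f) {i : ℕ} (hi : plen f ≤ i) : f i = 0 := by
  by_contra hne
  have hmem : i ∈ f.support := Finsupp.mem_support_iff.mpr hne
  rw [support_eq_range h, Finset.mem_range] at hmem
  omega

lemma psize_add (f g : Ptn) : psize (f + g) = psize f + psize g := by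
  unfold psize
  exact Finsupp.sum_add_index' (fun _ => rfl) (fun _ _ _ => rfl)

lemma psize_single (k c : ℕ) : psize (Finsupp.single k c) = c := by
  unfold psize
  exact Finsupp.sum_single_index rfl

lemma psize_zero : psize (0 : Ptn) = 0 := by
  simp [psize]

lemma psize_eq_sum (f : Ptn) : psize f = ∑ i ∈ f.support, f i := rfl

lemma apply_le_psize (f : Ptn) (i : ℕ) : f i ≤ psize f := by
  by_cases hi : f i = 0
  · omega
  · rw [psize_eq_sum]
    exact Finset.single_le_sum (fun _ _ => Nat.zero_le _) (Finsupp.mem_support_iff.mpr hi)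

lemma plen_le_psize (f : Ptn) : plen f ≤ psize f := by
  rw [psize_eq_sum, plen]
  calc f.support.card = ∑ _i ∈ f.support, 1 := by simp
    _ ≤ ∑ i ∈ f.support, f i :=
        Finset.sum_le_sum fun i hi =>
          Nat.one_le_iff_ne_zero.mpr (Finsupp.mem_support_iff.mp hi)

lemma eq_zero_of_psize_eq_zero {f : Ptn} (h : psize f = 0) : f = 0 := by
  ext a
  have := apply_le_psize f a
  simp only [Finsupp.coe_zero, Pi.zero_apply]
  omega

lemma eq_single_of_psize_one {d : Ptn} (h : psize d = 1) : ∃ k, d = Finsupp.single k 1 := by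
  have hne : d.support.Nonempty := by
    rw [Finset.nonempty_iff_ne_empty]
    intro hemp
    have hd0 : d = 0 := Finsupp.support_eq_empty.mp hemp
    rw [hd0, psize_zero] at h
    omega
  obtain ⟨k, hk⟩ := hne
  refine ⟨k, ?_⟩
  have h1 : d k ≤ 1 := h ▸ apply_le_psize d k
  have h2 : 1 ≤ d k := Nat.one_le_iff_ne_zero.mpr (Finsupp.mem_support_iff.mp hk)
  ext a
  rcases eq_or_ne a k with rfl | hak
  · rw [Finsupp.single_eq_same]; omega
  · rw [Finsupp.single_eq_of_ne' (Ne.symm hak)]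
    by_contra hda
    have hmem : a ∈ d.support := Finsupp.mem_support_iff.mpr hda
    have hsub : ({k, a} : Finset ℕ) ⊆ d.support := by
      intro x hx
      rcases Finset.mem_insert.mp hx with rfl | hx
      · exact hk
      · rw [Finset.mem_singleton] at hx; exact hx ▸ hmem
    have hsum : ∑ i ∈ ({k, a} : Finset ℕ), d i ≤ psize d := by
      rw [psize_eq_sum]
      exact Finset.sum_le_sum_of_subset hsub
    rw [Finset.sum_insert (by simp [Ne.symm hak]), Finset.sum_singleton] at hsum
    omega

lemma exists_single_of_covers {lam mu : Ptn} (h : Covers lam mu) :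
    ∃ k, lam = mu + Finsupp.single k 1 := by
  obtain ⟨hl, hm, hle, hps⟩ := h
  have hle' : mu ≤ lam := Finsupp.le_def.mpr hle
  have hd : mu + (lam - mu) = lam := add_tsub_cancel_of_le hle'
  have hpd : psize (lam - mu) = 1 := by
    have := psize_add mu (lam - mu)
    rw [hd] at this
    omega
  obtain ⟨k, hk⟩ := eq_single_of_psize_one hpd
  exact ⟨k, by rw [← hd, hk]⟩

lemma covers_of_single {mu : Ptn} (hm : IsPtn mu) {k : ℕ}
    (hl : IsPtn (mu + Finsupp.single k 1)) : Covers (mu + Finsupp.single k 1) mu := by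
  refine ⟨hl, hm, fun i => ?_, by rw [psize_add, psize_single]⟩
  rw [Finsupp.add_apply]
  exact Nat.le_add_right _ _

lemma k_le_plen_of_covers {lam mu : Ptn} (h : Covers lam mu) {k : ℕ}
    (hk : lam = mu + Finsupp.single k 1) : k ≤ plen mu := by
  by_contra hlt
  push_neg at hlt
  have h0 : mu (plen mu) = 0 := apply_eq_zero_of_plen_le h.2.1 le_rfl
  have h0' : mu k = 0 := apply_eq_zero_of_plen_le h.2.1 (by omega)
  have hlk : lam k = 1 := by rw [hk, Finsupp.add_apply, h0', Finsupp.single_eq_same]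
  have hlp : lam (plen mu) = 0 := by
    rw [hk, Finsupp.add_apply, h0, Finsupp.single_eq_of_ne (by omega)]
    rfl
  have := h.1 (show plen mu ≤ k by omega)
  omega

lemma isPtn_add_single_zero {mu : Ptn} (hm : IsPtn mu) :
    IsPtn (mu + Finsupp.single 0 1) := by
  intro i j hij
  have ha := hm hij
  have hb := hm (Nat.zero_le j)
  simp only [Finsupp.add_apply, Finsupp.single_apply]
  split_ifs <;> omega

lemma isPtn_add_single {mu : Ptn} (hm : IsPtn mu) {k : ℕ} (hk : 1 ≤ k)
    (hlt : mu k < mu (k - 1)) : IsPtn (mu + Finsupp.single k 1) := by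
  intro i j hij
  simp only [Finsupp.add_apply, Finsupp.single_apply]
  by_cases h1 : k = i
  · subst h1
    by_cases h2 : k = j
    · subst h2
      simp
    · rw [if_pos rfl, if_neg h2]
      have := hm hij
      omega
  · by_cases h2 : k = j
    · subst h2
      rw [if_neg h1, if_pos rfl]
      have hik : i ≤ k - 1 := by omega
      have hc := hm hik
      omega
    · rw [if_neg h1, if_neg h2]
      have := hm hij
      omega

lemma crux {mu : Ptn} (hm : IsPtn mu) {k : ℕ}
    (hnot : ¬IsPtn (mu + Finsupp.single k 1)) : 1 ≤ k ∧ mu (k - 1) = mu k := by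
  rcases Nat.eq_zero_or_pos k with rfl | hk
  · exact absurd (isPtn_add_single_zero hm) hnot
  refine ⟨hk, ?_⟩
  have hle : mu k ≤ mu (k - 1) := hm (by omega)
  by_contra hne
  have hlt : mu k < mu (k - 1) := by omega
  exact hnot (isPtn_add_single hm hk hlt)

lemma plen_add_single_le (mu : Ptn) (k : ℕ) :
    plen (mu + Finsupp.single k 1) ≤ plen mu + 1 := by
  unfold plen
  calc (mu + Finsupp.single k 1).support.card
      ≤ (mu.support ∪ (Finsupp.single k 1).support).card :=
        Finset.card_le_card Finsupp.support_add
    _ ≤ mu.support.card + (Finsupp.single k 1).support.card := Finset.card_union_le _ _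
    _ ≤ mu.support.card + 1 := by
        have := Finset.card_le_card (Finsupp.support_single_subset (a := k) (b := 1))
        simpa using this

lemma JT_pad {mu : Ptn} (hm : IsPtn mu) {N : ℕ} (hN : plen mu ≤ N) :
    JTdet N mu = schur mu := by
  induction N with
  | zero =>
    have h : plen mu = 0 := by omega
    rw [schur_eq_JTdet, h]
  | succ n ih =>
    by_cases h : plen mu ≤ n
    · rw [JTdet_succ n mu (apply_eq_zero_of_plen_le hm h)]
      exact ih h
    · have h' : plen mu = n + 1 := by omega
      rw [schur_eq_JTdet, h']

/-! #### The Pieri rule for `h₁` -/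

lemma JTdet_zero_of_not {mu : Ptn} (hm : IsPtn mu) {k : ℕ} (hk : k < plen mu + 2)
    (hnot : ¬IsPtn (mu + Finsupp.single k 1)) :
    JTdet (plen mu + 2) (mu + Finsupp.single k 1) = 0 := by
  obtain ⟨hk1, heq⟩ := crux hm hnot
  apply Matrix.det_zero_of_row_eq
    (i := (⟨k - 1, by omega⟩ : Fin (plen mu + 2))) (j := (⟨k, by omega⟩ : Fin (plen mu + 2)))
  · intro hc
    have := Fin.mk.injEq (k - 1) (by omega : k - 1 < plen mu + 2) k (by omega) ▸ hc
    omega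
  · funext j
    have e1 : ((mu + Finsupp.single k 1 : Ptn)) (k - 1) = mu k := by
      rw [Finsupp.add_apply, Finsupp.single_eq_of_ne (by omega), add_zero, heq]
    have e2 : ((mu + Finsupp.single k 1 : Ptn)) k = mu k + 1 := by
      rw [Finsupp.add_apply, Finsupp.single_eq_same]
    show hz ((((mu + Finsupp.single k 1 : Ptn)) (k - 1) : ℤ) - ((k - 1 : ℕ) : ℤ) + (j : ℕ)) =
      hz ((((mu + Finsupp.single k 1 : Ptn)) k : ℤ) - ((k : ℕ) : ℤ) + (j : ℕ))
    rw [e1, e2]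
    congr 1
    omega

def DD (mu : Ptn) : Finset Ptn :=
  ((Finset.range (plen mu + 2)).filter fun k => IsPtn (mu + Finsupp.single k 1)).image
    fun k => mu + Finsupp.single k 1

lemma pieri {mu : Ptn} (hm : IsPtn mu) :
    hsym 1 * schur mu = ∑ lam ∈ DD mu, schur lam := by
  have h0 : mu (plen mu + 1) = 0 := apply_eq_zero_of_plen_le hm (by omega)
  have hstar := star mu (plen mu + 1) h0
  rw [JT_pad hm (by omega)] at hstar
  rw [mul_comm, hstar]
  rw [DD, Finset.sum_image (by
    intro a _ b _ hab
    have := add_left_cancel hab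
    exact Finsupp.single_left_injective (one_ne_zero) this)]
  rw [← Finset.sum_filter_add_sum_filter_not (Finset.range (plen mu + 1 + 1))
    (fun k => IsPtn (mu + Finsupp.single k 1))]
  have hzero : ∑ k ∈ (Finset.range (plen mu + 1 + 1)).filter
      (fun k => ¬IsPtn (mu + Finsupp.single k 1)),
      JTdet (plen mu + 1 + 1) (mu + Finsupp.single k 1) = 0 := by
    apply Finset.sum_eq_zero
    intro k hk
    rw [Finset.mem_filter, Finset.mem_range] at hk
    exact JTdet_zero_of_not hm (by omega) hk.2
  rw [hzero, add_zero]
  apply Finset.sum_congr rfl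
  intro k hk
  rw [Finset.mem_filter] at hk
  exact JT_pad hk.2 (by have := plen_add_single_le mu k; omega)

lemma mem_DD {mu lam : Ptn} (hm : IsPtn mu) : lam ∈ DD mu ↔ Covers lam mu := by
  constructor
  · intro h
    simp only [DD, Finset.mem_image, Finset.mem_filter, Finset.mem_range] at h
    obtain ⟨k, ⟨_, hpt⟩, rfl⟩ := h
    exact covers_of_single hm hpt
  · intro h
    obtain ⟨k, hk⟩ := exists_single_of_covers h
    have hkle := k_le_plen_of_covers h hk
    simp only [DD, Finset.mem_image, Finset.mem_filter, Finset.mem_range]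
    exact ⟨k, ⟨by omega, hk ▸ h.1⟩, hk.symm⟩

/-! #### Chains in Young's lattice and the recursion for `F` -/

def Chains (n : ℕ) (lam : Ptn) : Type :=
  {T : Fin (n + 1) → Ptn //
    T 0 = 0 ∧ T (Fin.last n) = lam ∧ ∀ i : Fin n, Covers (T i.succ) (T i.castSucc)}

def Fgen (n : ℕ) (lam : Ptn) : ℕ := Nat.card (Chains n lam)

lemma F_eq (lam : Ptn) : F lam = Fgen (psize lam) lam := rfl

def CC (lam : Ptn) : Finset Ptn := (Finset.Iic lam).filter fun mu => Covers lam mu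

lemma mem_CC {lam mu : Ptn} : mu ∈ CC lam ↔ Covers lam mu := by
  rw [CC, Finset.mem_filter, Finset.mem_Iic, and_iff_right_iff_imp]
  exact fun h => Finsupp.le_def.mpr h.2.2.1

noncomputable instance coversFintype (lam : Ptn) : Fintype {mu : Ptn // Covers lam mu} :=
  Fintype.subtype (CC lam) fun _ => mem_CC

def toChain {lam : Ptn} {n : ℕ}
    (p : Σ mu : {mu : Ptn // Covers lam mu}, Chains n mu.1) : Chains (n + 1) lam :=
  ⟨Fin.snoc p.2.1 lam, by
    obtain ⟨hT0, hTl, hTc⟩ := p.2.2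
    have hcov := p.1.2
    refine ⟨?_, ?_, ?_⟩
    · rw [show (0 : Fin (n + 2)) = Fin.castSucc 0 from (Fin.castSucc_zero).symm,
        Fin.snoc_castSucc]
      exact hT0
    · exact Fin.snoc_last _ _
    · intro i
      refine Fin.lastCases ?_ ?_ i
      · rw [Fin.succ_last, Fin.snoc_last]
        rw [show (Fin.last n).castSucc = Fin.castSucc (Fin.last n) from rfl,
          Fin.snoc_castSucc, hTl]
        exact hcov
      · intro j
        rw [show (Fin.castSucc j).succ = Fin.castSucc j.succ from Fin.succ_castSucc _,
          Fin.snoc_castSucc,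
          show (Fin.castSucc j).castSucc = Fin.castSucc j.castSucc from rfl,
          Fin.snoc_castSucc]
        exact hTc j⟩

lemma toChain_bijective {lam : Ptn} {n : ℕ} :
    Function.Bijective (toChain (lam := lam) (n := n)) := by
  constructor
  · rintro ⟨⟨mu, hcov⟩, ⟨T, hT⟩⟩ ⟨⟨mu', hcov'⟩, ⟨T', hT'⟩⟩ h
    have hfun : (Fin.snoc T lam : Fin (n + 2) → Ptn) = Fin.snoc T' lam :=
      congrArg Subtype.val h
    have hTT : T = T' := by
      funext i
      have := congrFun hfun (Fin.castSucc i)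
      rwa [Fin.snoc_castSucc, Fin.snoc_castSucc] at this
    subst hTT
    have hmm : mu = mu' := by
      rw [show mu = T (Fin.last n) from hT.2.1.symm,
        show mu' = T (Fin.last n) from hT'.2.1.symm]
    subst hmm
    rfl
  · rintro ⟨T, hT0, hTl, hTc⟩
    have hcov : Covers lam (T (Fin.castSucc (Fin.last n))) := by
      have := hTc (Fin.last n)
      rwa [Fin.succ_last, hTl] at this
    refine ⟨⟨⟨T (Fin.castSucc (Fin.last n)), hcov⟩,
      ⟨T ∘ Fin.castSucc, ?_, rfl, ?_⟩⟩, ?_⟩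
    · show T (Fin.castSucc 0) = 0
      rw [Fin.castSucc_zero]
      exact hT0
    · intro i
      have h := hTc i.castSucc
      rw [show (Fin.castSucc i).succ = Fin.castSucc i.succ from Fin.succ_castSucc _] at h
      exact h
    · apply Subtype.ext
      show Fin.snoc (T ∘ Fin.castSucc) lam = T
      funext i
      refine Fin.lastCases ?_ ?_ i
      · rw [Fin.snoc_last, hTl]
      · intro j
        rw [Fin.snoc_castSucc]
        rfl

instance chainsFinite (n : ℕ) (lam : Ptn) : Finite (Chains n lam) := by
  induction n generalizing lam with
  | zero =>
    have hsub : Subsingleton (Chains 0 lam) := by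
      constructor
      rintro ⟨T, hT⟩ ⟨T', hT'⟩
      apply Subtype.ext
      funext i
      show T i = T' i
      have h1 : i = 0 := Fin.ext (by have := i.isLt; simp)
      rw [h1, hT.1, hT'.1]
    exact Finite.of_subsingleton
  | succ n ih =>
    have : Finite (Σ mu : {mu : Ptn // Covers lam mu}, Chains n mu.1) := by
      haveI := fun (mu : {mu : Ptn // Covers lam mu}) => ih mu.1
      infer_instance
    exact Finite.of_surjective _ toChain_bijective.surjective

lemma Fgen_succ (n : ℕ) (lam : Ptn) : Fgen (n + 1) lam = ∑ mu ∈ CC lam, Fgen n mu := by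
  haveI : ∀ mu : {mu : Ptn // Covers lam mu}, Fintype (Chains n mu.1) :=
    fun _ => Fintype.ofFinite _
  haveI : Fintype (Chains (n + 1) lam) := Fintype.ofFinite _
  rw [Fgen, Nat.card_congr (Equiv.ofBijective _ toChain_bijective).symm,
    Nat.card_eq_fintype_card, Fintype.card_sigma]
  rw [Finset.sum_subtype (CC lam) (fun _ => mem_CC) (fun mu => Fgen n mu)]
  exact Finset.sum_congr rfl fun mu _ => (Nat.card_eq_fintype_card).symm

lemma F_rec {lam : Ptn} {n : ℕ} (h : psize lam = n + 1) :
    F lam = ∑ mu ∈ CC lam, F mu := by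
  rw [F_eq, h, Fgen_succ]
  apply Finset.sum_congr rfl
  intro mu hmu
  have hcov := mem_CC.mp hmu
  have hps : psize mu = n := by
    have := hcov.2.2.2
    omega
  rw [F_eq, hps]

lemma F_zero : F (0 : Ptn) = 1 := by
  rw [F_eq, psize_zero]
  haveI : Nonempty (Chains 0 (0 : Ptn)) :=
    ⟨⟨fun _ => 0, rfl, rfl, fun i => i.elim0⟩⟩
  haveI : Subsingleton (Chains 0 (0 : Ptn)) := by
    constructor
    rintro ⟨T, hT⟩ ⟨T', hT'⟩
    apply Subtype.ext
    funext i
    show T i = T' i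
    have h1 : i = 0 := Fin.ext (by have := i.isLt; simp)
    rw [h1, hT.1, hT'.1]
  exact Nat.card_unique

lemma schur_zero : schur (0 : Ptn) = 1 := by
  have h : plen (0 : Ptn) = 0 := by simp [plen]
  rw [schur_eq_JTdet, h, JTdet]
  exact Matrix.det_fin_zero

/-! #### The finset of partitions of `n` -/

def PP (n : ℕ) : Finset Ptn :=
  (Finset.Iic (n • colP n)).filter fun f => IsPtn f ∧ psize f = n

lemma mem_PP {n : ℕ} {f : Ptn} : f ∈ PP n ↔ IsPtn f ∧ psize f = n := by
  rw [PP, Finset.mem_filter, Finset.mem_Iic, and_iff_right_iff_imp]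
  rintro ⟨hpt, hps⟩
  rw [Finsupp.le_def]
  intro i
  by_cases hi : i < n
  · have h1 : f i ≤ n := hps ▸ apply_le_psize f i
    have h2 : (n • colP n) i = n := by
      rw [Finsupp.smul_apply]
      simp [colP, hi]
    omega
  · have h3 : f i = 0 := by
      apply apply_eq_zero_of_plen_le hpt
      have := plen_le_psize f
      omega
    simp [h3]

lemma PP_zero : PP 0 = {(0 : Ptn)} := by
  ext f
  rw [mem_PP, Finset.mem_singleton]
  constructor
  · rintro ⟨_, hps⟩
    exact eq_zero_of_psize_eq_zero hps
  · rintro rfl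
    exact ⟨isPtn_zero, psize_zero⟩

lemma main_sum (m : ℕ) : ∑ lam ∈ PP m, (F lam) • schur lam = (hsym 1) ^ m := by
  induction m with
  | zero =>
    rw [PP_zero, Finset.sum_singleton, F_zero, schur_zero, pow_zero, one_smul]
  | succ m ih =>
    have step1 : ∀ lam ∈ PP (m + 1), (F lam) • schur lam =
        ∑ mu ∈ PP m, if Covers lam mu then (F mu) • schur lam else 0 := by
      intro lam hlam
      obtain ⟨hpt, hps⟩ := mem_PP.mp hlam
      rw [F_rec hps, Finset.sum_smul]
      have hCC : CC lam = (PP m).filter fun mu => Covers lam mu := by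
        ext mu
        rw [mem_CC, Finset.mem_filter, mem_PP]
        constructor
        · intro h
          refine ⟨⟨h.2.1, ?_⟩, h⟩
          have := h.2.2.2
          omega
        · exact fun h => h.2
      rw [hCC, Finset.sum_filter]
    rw [Finset.sum_congr rfl step1, Finset.sum_comm]
    have step2 : ∀ mu ∈ PP m,
        (∑ lam ∈ PP (m + 1), if Covers lam mu then (F mu) • schur lam else 0) =
          (F mu) • (hsym 1 * schur mu) := by
      intro mu hmu
      obtain ⟨hpt, hps⟩ := mem_PP.mp hmu
      have hDD : DD mu = (PP (m + 1)).filter fun lam => Covers lam mu := by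
        ext lam
        rw [mem_DD hpt, Finset.mem_filter, mem_PP]
        constructor
        · intro h
          refine ⟨⟨h.1, ?_⟩, h⟩
          have := h.2.2.2
          omega
        · exact fun h => h.2
      rw [← Finset.sum_filter, ← hDD, ← Finset.smul_sum, ← pieri hpt]
    rw [Finset.sum_congr rfl step2]
    rw [Finset.sum_congr rfl fun mu _ => (mul_smul_comm (F mu) (hsym 1) (schur mu)).symm]
    rw [← Finset.mul_sum, ih, pow_succ']

end Statement8Aux

end WAPpr

end

open WAPpr in
/-- `∑_{λ ⊢ n} F_λ s_λ = h_1^n`. -/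
theorem sum_F_schur (n : ℕ) :
    ∑ᶠ (lam : Ptn) (_ : IsPtn lam ∧ psize lam = n), (F lam) • schur lam =
      (hsym 1) ^ n := by
  rw [finsum_cond_eq_sum_of_cond_iff (fun lam => (F lam) • schur lam)
    (fun {lam} _ => mem_PP.symm)]
  exact main_sum n
end

section
/- Let (A_n) be an Appell sequence and define the ring homomorphism φ_A : Λ → ℝ[x] by φ_A(h_m) = A_m/m!. Then for every partition λ, φ_A(s_λ) = F_λ · A_λ / |λ|!, where A_λ = Wr[A_{n_1},...,A_{n_r}] / ∏_{i<j}(n_j − n_i) is the Wronskian Appell polynomial with degree vector (n_1,...,n_r) = (λ_r, λ_{r-1}+1, ..., λ_1+r−1). -/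
open scoped BigOperators

noncomputable section

namespace WAPaux

open WAPpr Polynomial Finset Matrix

/-! ### Basic partition lemmas -/

lemma dc_finset_eq_range {s : Finset ℕ} (hdc : ∀ j ∈ s, ∀ i ≤ j, i ∈ s) :
    s = Finset.range s.card := by
  have key : ∀ k, k ∈ s ↔ k < s.card := by
    intro k
    constructor
    · intro hk
      have hsub : Finset.range (k + 1) ⊆ s := fun i hi =>
        hdc k hk i (Nat.lt_succ_iff.mp (Finset.mem_range.mp hi))
      have := Finset.card_le_card hsub
      simpa using this
    · intro hk
      by_contra hks
      have hsub : s ⊆ Finset.range k := by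
        intro x hx
        rw [Finset.mem_range]
        by_contra hxk
        exact hks (hdc x hx k (le_of_not_gt hxk))
      have := Finset.card_le_card hsub
      simp only [Finset.card_range] at this
      omega
  ext k
  simp [key]

variable {lam mu : Ptn}

lemma support_eq_range (h : IsPtn lam) : lam.support = Finset.range (plen lam) := by
  have := dc_finset_eq_range (s := lam.support) ?_
  · exact this
  · intro j hj i hij
    rw [Finsupp.mem_support_iff] at hj ⊢
    have := h hij
    omega

lemma lt_plen_iff (h : IsPtn lam) {k : ℕ} : k < plen lam ↔ lam k ≠ 0 := by
  rw [← Finset.mem_range, ← support_eq_range h, Finsupp.mem_support_iff]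

lemma psize_eq_sum (f : Ptn) {s : Finset ℕ} (hs : f.support ⊆ s) :
    psize f = ∑ i ∈ s, f i := by
  rw [psize, Finsupp.sum]
  exact Finset.sum_subset hs fun x _ hx => Finsupp.notMem_support_iff.mp hx

/-- Decrement the `k`-th part. -/
def dec (f : Ptn) (k : ℕ) : Ptn := f.update k (f k - 1)

lemma dec_apply (f : Ptn) (k j : ℕ) : dec f k j = if j = k then f k - 1 else f j := by
  rw [dec, Finsupp.coe_update, Function.update_apply]

/-- Indices at which a partition may be decremented. -/
def Rset (f : Ptn) : Finset ℕ := (Finset.range (plen f)).filter fun k => f (k + 1) < f k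

lemma mem_Rset (h : IsPtn lam) {k : ℕ} : k ∈ Rset lam ↔ lam (k + 1) < lam k := by
  simp only [Rset, Finset.mem_filter, Finset.mem_range, and_iff_right_iff_imp]
  intro hlt
  rw [lt_plen_iff h]
  omega

lemma dec_le (f : Ptn) (k : ℕ) : ∀ j, dec f k j ≤ f j := by
  intro j
  rw [dec_apply]
  rcases eq_or_ne j k with rfl | hj
  · simp
  · simp [hj]

lemma isPtn_dec (h : IsPtn lam) {k : ℕ} (hk : lam (k + 1) < lam k) :
    IsPtn (dec lam k) := by
  intro i j hij
  rw [dec_apply, dec_apply]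
  by_cases hj : j = k
  · subst hj
    by_cases hi : i = j
    · simp [hi]
    · rw [if_neg hi, if_pos rfl]
      have := h hij
      omega
  · rw [if_neg hj]
    by_cases hi : i = k
    · subst hi
      rw [if_pos rfl]
      have hij' : i + 1 ≤ j := by omega
      have := h hij'
      omega
    · rw [if_neg hi]
      exact h hij

lemma psize_dec (h : IsPtn lam) {k : ℕ} (hk : lam (k + 1) < lam k) :
    psize (dec lam k) + 1 = psize lam := by
  have hks : k ∈ lam.support := Finsupp.mem_support_iff.mpr (by omega)
  have hsub : (dec lam k).support ⊆ lam.support := by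
    intro j hj
    rw [Finsupp.mem_support_iff] at hj ⊢
    have := dec_le lam k j
    omega
  rw [psize_eq_sum (dec lam k) hsub, psize_eq_sum lam (le_refl _)]
  rw [← Finset.add_sum_erase _ _ hks, ← Finset.add_sum_erase _ _ hks]
  have hrest : ∑ j ∈ lam.support.erase k, dec lam k j = ∑ j ∈ lam.support.erase k, lam j := by
    apply Finset.sum_congr rfl
    intro j hj
    rw [dec_apply, if_neg (Finset.ne_of_mem_erase hj)]
  rw [hrest, dec_apply, if_pos rfl]
  omega

lemma covers_dec (h : IsPtn lam) {k : ℕ} (hk : lam (k + 1) < lam k) :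
    Covers lam (dec lam k) :=
  ⟨h, isPtn_dec h hk, dec_le lam k, psize_dec h hk⟩

lemma nat_sum_eq_one {s : Finset ℕ} {d : ℕ → ℕ} (h : ∑ i ∈ s, d i = 1) :
    ∃ k ∈ s, d k = 1 ∧ ∀ j ∈ s, j ≠ k → d j = 0 := by
  have hex : ∃ k ∈ s, d k ≠ 0 := by
    by_contra hc
    push_neg at hc
    rw [Finset.sum_eq_zero hc] at h
    omega
  obtain ⟨k, hks, hk⟩ := hex
  have hsplit := Finset.add_sum_erase _ d hks
  rw [h] at hsplit
  have hdk : d k = 1 ∧ ∑ j ∈ s.erase k, d j = 0 := by omega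
  refine ⟨k, hks, hdk.1, fun j hj hjk => ?_⟩
  have := Finset.sum_eq_zero_iff.mp hdk.2 j (Finset.mem_erase.mpr ⟨hjk, hj⟩)
  exact this

lemma covers_existsUnique (hc : Covers lam mu) :
    ∃! k, k ∈ Rset lam ∧ dec lam k = mu := by
  obtain ⟨hlam, hmu, hle, hps⟩ := hc
  have hsub : mu.support ⊆ lam.support := by
    intro j hj
    rw [Finsupp.mem_support_iff] at hj ⊢
    have := hle j
    omega
  have hsum : ∑ i ∈ lam.support, (lam i - mu i) = 1 := by
    have h1 : ∑ i ∈ lam.support, (mu i + (lam i - mu i)) = ∑ i ∈ lam.support, lam i := by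
      apply Finset.sum_congr rfl
      intro i _
      have := hle i
      omega
    rw [Finset.sum_add_distrib] at h1
    rw [← psize_eq_sum lam (le_refl _), ← psize_eq_sum mu hsub] at h1
    omega
  obtain ⟨k, hks, hk1, hk0⟩ := nat_sum_eq_one hsum
  have hother : ∀ j, j ≠ k → mu j = lam j := by
    intro j hj
    by_cases hjs : j ∈ lam.support
    · have := hk0 j hjs hj
      have := hle j
      omega
    · rw [Finsupp.notMem_support_iff] at hjs
      have := hle j
      omega
  have hmuk : mu k = lam k - 1 := by have := hle k; omega
  have hkR : k ∈ Rset lam := by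
    rw [mem_Rset hlam]
    have h1 : mu (k + 1) ≤ mu k := hmu (Nat.le_succ k)
    have h2 : mu (k + 1) = lam (k + 1) := hother (k + 1) (by omega)
    omega
  have hdec : dec lam k = mu := by
    ext j
    rw [dec_apply]
    rcases eq_or_ne j k with rfl | hj
    · simp [hmuk]
    · simp [hj, hother j hj]
  refine ⟨k, ⟨hkR, hdec⟩, ?_⟩
  rintro k' ⟨hk'R, hdec'⟩
  rw [mem_Rset hlam] at hk'R
  by_contra hne
  have : mu k' = lam k' := hother k' hne
  have : dec lam k' k' = lam k' - 1 := by rw [dec_apply, if_pos rfl]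
  rw [hdec'] at this
  omega

/-! ### Chains and the recursion for `F` -/

/-- Saturated chains of length `N` from `∅` to `ν`. -/
def Chains (N : ℕ) (ν : Ptn) : Type :=
  {T : Fin (N + 1) → Ptn // T 0 = 0 ∧ T (Fin.last N) = ν ∧
    ∀ i : Fin N, Covers (T i.succ) (T i.castSucc)}

lemma F_eq (ν : Ptn) : F ν = Nat.card (Chains (psize ν) ν) := rfl

instance chains_zero_subsingleton (ν : Ptn) : Subsingleton (Chains 0 ν) := by
  constructor
  rintro ⟨T, hT0, -, -⟩ ⟨S, hS0, -, -⟩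
  apply Subtype.ext
  funext i
  have hi : i = 0 := Fin.ext (by omega)
  show T i = S i
  rw [hi, hT0, hS0]

lemma psize_zero : psize (0 : Ptn) = 0 := by simp [psize]

lemma eq_zero_of_psize (h : psize lam = 0) : lam = 0 := by
  ext i
  by_contra hi
  have hmem : i ∈ lam.support := Finsupp.mem_support_iff.mpr (by simpa using hi)
  have hle := Finset.single_le_sum (f := fun j => lam j) (fun _ _ => Nat.zero_le _) hmem
  rw [psize, Finsupp.sum] at h
  simp only [h, Nat.le_zero] at hle
  simp [hle] at hi

lemma F_zero : F 0 = 1 := by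
  rw [F_eq, psize_zero]
  have : Nonempty (Chains 0 0) := ⟨⟨fun _ => 0, rfl, rfl, fun i => i.elim0⟩⟩
  exact Nat.card_unique

/-- The partition immediately before `lam` in a chain. -/
def penult {N : ℕ} (T : Chains (N + 1) lam) : Ptn := T.1 ((Fin.last N).castSucc)

lemma covers_penult {N : ℕ} (T : Chains (N + 1) lam) : Covers lam (penult T) := by
  have h := T.2.2.2 (Fin.last N)
  rwa [Fin.succ_last, T.2.2.1] at h

/-- Forward map: cut off the last element of a chain. -/
def fwd {N : ℕ} (T : Chains (N + 1) lam) :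
    Σ k : (Rset lam : Finset ℕ), Chains N (dec lam (k : ℕ)) :=
  ⟨⟨(covers_existsUnique (covers_penult T)).choose,
    (covers_existsUnique (covers_penult T)).choose_spec.1.1⟩,
   ⟨T.1 ∘ Fin.castSucc, by
      refine ⟨?_, ?_, ?_⟩
      · show T.1 ((0 : Fin (N + 1)).castSucc) = 0
        rw [Fin.castSucc_zero]
        exact T.2.1
      · exact (covers_existsUnique (covers_penult T)).choose_spec.1.2.symm
      · intro i
        have h := T.2.2.2 i.castSucc
        show Covers (T.1 i.succ.castSucc) (T.1 i.castSucc.castSucc)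
        rwa [Fin.succ_castSucc] at h⟩⟩

/-- Backward map: append `lam` to a chain ending at `dec lam k`. -/
def bwd (hlam : IsPtn lam) {N : ℕ} (k : (Rset lam : Finset ℕ))
    (T' : Chains N (dec lam (k : ℕ))) : Chains (N + 1) lam :=
  ⟨Fin.snoc T'.1 lam, by
    refine ⟨?_, ?_, ?_⟩
    · show (Fin.snoc T'.1 lam : Fin (N + 2) → Ptn) 0 = 0
      rw [show (0 : Fin (N + 2)) = Fin.castSucc (0 : Fin (N + 1)) from rfl, Fin.snoc_castSucc]
      exact T'.2.1
    · exact Fin.snoc_last _ _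
    · intro i
      induction i using Fin.lastCases with
      | last =>
        rw [Fin.succ_last, Fin.snoc_last, Fin.snoc_castSucc, T'.2.2.1]
        exact covers_dec hlam ((mem_Rset hlam).mp k.2)
      | cast i =>
        rw [Fin.succ_castSucc, Fin.snoc_castSucc, Fin.snoc_castSucc]
        exact T'.2.2.2 i⟩

/-- The chain equivalence realising the recursion. -/
def chainEquiv (hlam : IsPtn lam) (N : ℕ) :
    Chains (N + 1) lam ≃ Σ k : (Rset lam : Finset ℕ), Chains N (dec lam (k : ℕ)) where
  toFun := fwd
  invFun := fun p => bwd hlam p.1 p.2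
  left_inv := by
    intro T
    apply Subtype.ext
    funext i
    show (Fin.snoc (fwd T).2.1 lam : Fin (N + 2) → Ptn) i = T.1 i
    induction i using Fin.lastCases with
    | last => rw [Fin.snoc_last]; exact T.2.2.1.symm
    | cast i => rw [Fin.snoc_castSucc]; rfl
  right_inv := by
    rintro ⟨k, T'⟩
    have hpen : penult (bwd hlam k T') = dec lam (k : ℕ) := by
      show (Fin.snoc T'.1 lam : Fin (N + 2) → Ptn) ((Fin.last N).castSucc) = _
      rw [Fin.snoc_castSucc]
      exact T'.2.2.1
    have hEU := covers_existsUnique (covers_penult (bwd hlam k T'))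
    have hkk : (⟨hEU.choose, hEU.choose_spec.1.1⟩ : (Rset lam : Finset ℕ)) = k := by
      apply Subtype.ext
      exact (hEU.choose_spec.2 (k : ℕ) ⟨k.2, hpen.symm⟩).symm
    have h2 : (fwd (bwd hlam k T')).1 = k := hkk
    have hchain : (fwd (bwd hlam k T')).2.1 = T'.1 := by
      funext i
      show (Fin.snoc T'.1 lam : Fin (N + 2) → Ptn) i.castSucc = T'.1 i
      exact Fin.snoc_castSucc _ _ _
    have key : ∀ (a b : Σ k : (Rset lam : Finset ℕ), Chains N (dec lam (k : ℕ))),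
        a.1 = b.1 → a.2.1 = b.2.1 → a = b := by
      rintro ⟨a1, a2⟩ ⟨b1, b2⟩ h1 hc
      dsimp only at h1 hc
      subst h1
      exact congrArg (Sigma.mk a1) (Subtype.ext hc)
    exact key _ ⟨k, T'⟩ h2 hchain

lemma chains_finite : ∀ (N : ℕ) (ν : Ptn), IsPtn ν → Finite (Chains N ν)
  | 0, ν, _ => Finite.of_subsingleton
  | (N + 1), ν, hν => by
    haveI : ∀ k : (Rset ν : Finset ℕ), Finite (Chains N (dec ν (k : ℕ))) := fun k =>
      chains_finite N _ (isPtn_dec hν ((mem_Rset hν).mp k.2))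
    exact Finite.of_equiv _ (chainEquiv hν N).symm

lemma card_chains_rec (hlam : IsPtn lam) (N : ℕ) :
    Nat.card (Chains (N + 1) lam) = ∑ k ∈ Rset lam, Nat.card (Chains N (dec lam k)) := by
  haveI : ∀ k : (Rset lam : Finset ℕ), Finite (Chains N (dec lam (k : ℕ))) := fun k =>
    chains_finite N _ (isPtn_dec hlam ((mem_Rset hlam).mp k.2))
  haveI : ∀ k : (Rset lam : Finset ℕ), Fintype (Chains N (dec lam (k : ℕ))) := fun k =>
    Fintype.ofFinite _
  rw [Nat.card_congr (chainEquiv hlam N), Nat.card_eq_fintype_card, Fintype.card_sigma]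
  rw [← Finset.sum_coe_sort (Rset lam) (fun k => Nat.card (Chains N (dec lam k)))]
  apply Finset.sum_congr rfl
  intro k _
  rw [Nat.card_eq_fintype_card]

lemma F_rec (hlam : IsPtn lam) (hpos : psize lam ≠ 0) :
    F lam = ∑ k ∈ Rset lam, F (dec lam k) := by
  obtain ⟨N, hN⟩ : ∃ N, psize lam = N + 1 := ⟨psize lam - 1, by omega⟩
  rw [F_eq, hN, card_chains_rec hlam N]
  apply Finset.sum_congr rfl
  intro k hk
  rw [F_eq]
  have hps : psize (dec lam k) = N := by
    have := psize_dec hlam ((Finset.mem_filter.mp hk).2)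
    omega
  rw [hps]

/-! ### The Vandermonde-type product and the Wronskian of powers -/

/-- The Vandermonde product `∏_{i<j} (v j - v i)`. -/
def vprod {L : ℕ} (v : Fin L → ℝ) : ℝ := ∏ i, ∏ j ∈ Finset.Ioi i, (v j - v i)

lemma vprod_eq_zero {L : ℕ} {v : Fin L → ℝ} {a b : Fin L} (hab : a < b) (h : v a = v b) :
    vprod v = 0 := by
  rw [vprod]
  apply Finset.prod_eq_zero (Finset.mem_univ a)
  apply Finset.prod_eq_zero (Finset.mem_Ioi.mpr hab)
  rw [h, sub_self]

lemma le_of_strictMono {L : ℕ} {m : Fin L → ℕ} (h : StrictMono m) : ∀ i : Fin L, (i : ℕ) ≤ m i := by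
  intro i
  obtain ⟨v, hv⟩ := i
  induction v with
  | zero => exact Nat.zero_le _
  | succ v ih =>
    have hvL : v < L := by omega
    have h1 : m ⟨v, hvL⟩ < m ⟨v + 1, hv⟩ := h (Fin.mk_lt_mk.mpr (by omega))
    have h2 : v ≤ m ⟨v, hvL⟩ := ih hvL
    show v + 1 ≤ m ⟨v + 1, hv⟩
    omega

/-- The matrix whose `j`-th column consists of the iterated derivatives of `X ^ m j`. -/
def Wpow (L : ℕ) (m : Fin L → ℕ) : Matrix (Fin L) (Fin L) (Polynomial ℝ) :=
  Matrix.of fun i j => (fun q => derivative q)^[(i : ℕ)] (X ^ (m j))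

lemma iterate_deriv_eq (p : Polynomial ℝ) (k : ℕ) :
    (fun q : Polynomial ℝ => derivative q)^[k] p = derivative^[k] p := rfl

lemma det_Wpow {L : ℕ} (m : Fin L → ℕ) (hC : ∑ i : Fin L, (i : ℕ) ≤ ∑ i, m i) :
    (Wpow L m).det =
      C (vprod fun i => (m i : ℝ)) * X ^ (∑ i, m i - ∑ i : Fin L, (i : ℕ)) := by
  apply eq_of_infinite_eval_eq
  apply Set.Infinite.mono (s := {(0 : ℝ)}ᶜ)
  · intro t ht
    simp only [Set.mem_compl_iff, Set.mem_singleton_iff] at ht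
    show eval t (Wpow L m).det = eval t (C (vprod fun i => (m i : ℝ)) * X ^ _)
    have h1 : eval t ((Wpow L m).det) = ((Wpow L m).map (eval t) : Matrix _ _ ℝ).det := by
      have := RingHom.map_det (evalRingHom t) (Wpow L m)
      simpa [Matrix.map] using this
    have h2 : ((Wpow L m).map (eval t) : Matrix _ _ ℝ) =
        Matrix.of fun i j : Fin L =>
          t ^ (m j) * ((t⁻¹) ^ (i : ℕ) * ((m j).descFactorial (i : ℕ) : ℝ)) := by
      ext i j
      simp only [Matrix.map_apply, Matrix.of_apply]
      show eval t ((fun q : Polynomial ℝ => derivative q)^[(i : ℕ)] (X ^ (m j))) = _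
      rw [iterate_deriv_eq, Polynomial.iterate_derivative_X_pow_eq_smul]
      rcases le_or_gt (i : ℕ) (m j) with hij | hij
      · rw [eval_smul, smul_eq_mul, eval_pow, eval_X]
        rw [pow_sub₀ t ht hij, ← inv_pow]
        ring
      · rw [Nat.descFactorial_eq_zero_iff_lt.mpr hij]
        simp only [Nat.cast_zero, zero_smul, eval_zero, mul_zero]
    rw [h1, h2, show (Matrix.of fun i j : Fin L =>
        t ^ (m j) * ((t⁻¹) ^ (i : ℕ) * ((m j).descFactorial (i : ℕ) : ℝ))).det =
        (∏ i, t ^ (m i)) * Matrix.det (fun i j : Fin L => t⁻¹ ^ (i : ℕ) * (((m j).descFactorial (i : ℕ) : ℝ))) from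
      Matrix.det_mul_row _ _]
    rw [show (Matrix.det fun i j : Fin L => t⁻¹ ^ (i : ℕ) * (((m j).descFactorial (i : ℕ) : ℝ))) =
      (∏ i : Fin L, t⁻¹ ^ (i : ℕ)) *
        Matrix.det (Matrix.of fun i j : Fin L => (((m j).descFactorial (i : ℕ) : ℝ))) from
      Matrix.det_mul_column _ _]
    have h3 : Matrix.det (Matrix.of fun i j : Fin L => (((m j).descFactorial (i : ℕ) : ℝ))) =
        vprod fun i => (m i : ℝ) := by
      have h4 := Matrix.det_eval_matrixOfPolynomials_eq_det_vandermonde (R := ℝ)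
        (fun i => (m i : ℝ)) (fun i => descPochhammer ℝ (i : ℕ))
        (fun i => descPochhammer_natDegree ℝ (i : ℕ))
        (fun i => monic_descPochhammer ℝ (i : ℕ))
      rw [Matrix.det_vandermonde] at h4
      have h5 : (Matrix.of fun i j : Fin L => (((m j).descFactorial (i : ℕ) : ℝ)))ᵀ =
          Matrix.of fun i j : Fin L => (descPochhammer ℝ (j : ℕ)).eval ((m i : ℝ)) := by
        ext i j
        simp only [Matrix.transpose_apply, Matrix.of_apply]
        exact (descPochhammer_eval_eq_descFactorial ℝ _ _).symm
      rw [← Matrix.det_transpose, h5, ← h4, vprod]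
    rw [h3, eval_mul, eval_C, eval_pow, eval_X]
    rw [Finset.prod_pow_eq_pow_sum, Finset.prod_pow_eq_pow_sum]
    rw [pow_sub₀ t ht hC, inv_pow]
    ring
  · exact Set.Finite.infinite_compl (Set.finite_singleton 0)

lemma derivative_finset_prod {ι : Type*} [DecidableEq ι] (s : Finset ι) (f : ι → Polynomial ℝ) :
    derivative (∏ i ∈ s, f i) = ∑ b ∈ s, (∏ a ∈ s.erase b, f a) * derivative (f b) := by
  induction s using Finset.induction_on with
  | empty => simp
  | @insert i s his ih =>
    rw [Finset.prod_insert his, derivative_mul, Finset.sum_insert his, Finset.erase_insert his,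
      ih, Finset.mul_sum]
    congr 1
    · exact mul_comm _ _
    · apply Finset.sum_congr rfl
      intro b hb
      have hbi : b ≠ i := fun h => his (h ▸ hb)
      rw [Finset.erase_insert_of_ne hbi.symm,
        Finset.prod_insert (fun h => his (Finset.mem_of_mem_erase h))]
      ring

/-- Derivative of a determinant, column by column. -/
lemma derivative_det {L : ℕ} (M : Matrix (Fin L) (Fin L) (Polynomial ℝ)) :
    derivative M.det =
      ∑ b : Fin L, (M.updateCol b fun i => derivative (M i b)).det := by
  classical
  rw [Matrix.det_apply', map_sum]
  have hterm : ∀ σ : Equiv.Perm (Fin L),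
      derivative (((Equiv.Perm.sign σ : ℤ) : Polynomial ℝ) * ∏ i, M (σ i) i) =
      ∑ b : Fin L, ((Equiv.Perm.sign σ : ℤ) : Polynomial ℝ) *
        ((∏ a ∈ Finset.univ.erase b, M (σ a) a) * derivative (M (σ b) b)) := by
    intro σ
    rw [derivative_mul, Polynomial.derivative_intCast, zero_mul, zero_add,
      derivative_finset_prod, Finset.mul_sum]
  calc (∑ σ : Equiv.Perm (Fin L),
        derivative (((Equiv.Perm.sign σ : ℤ) : Polynomial ℝ) * ∏ i, M (σ i) i))
      = ∑ σ : Equiv.Perm (Fin L), ∑ b : Fin L, ((Equiv.Perm.sign σ : ℤ) : Polynomial ℝ) *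
          ((∏ a ∈ Finset.univ.erase b, M (σ a) a) * derivative (M (σ b) b)) :=
        Finset.sum_congr rfl fun σ _ => hterm σ
    _ = ∑ b : Fin L, ∑ σ : Equiv.Perm (Fin L), ((Equiv.Perm.sign σ : ℤ) : Polynomial ℝ) *
          ((∏ a ∈ Finset.univ.erase b, M (σ a) a) * derivative (M (σ b) b)) :=
        Finset.sum_comm
    _ = ∑ b : Fin L, (M.updateCol b fun i => derivative (M i b)).det := by
        refine Finset.sum_congr rfl fun b _ => ?_
        rw [Matrix.det_apply']
        refine Finset.sum_congr rfl fun σ _ => ?_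
        congr 1
        rw [← Finset.mul_prod_erase Finset.univ
            (fun i => M.updateCol b (fun i' => derivative (M i' b)) (σ i) i)
            (Finset.mem_univ b)]
        rw [mul_comm]
        congr 1
        · rw [Matrix.updateCol_apply, if_pos rfl]
        · apply Finset.prod_congr rfl
          intro a ha
          rw [Matrix.updateCol_apply, if_neg (Finset.ne_of_mem_erase ha)]

lemma wpow_col_update {L : ℕ} (m : Fin L → ℕ) (b : Fin L) :
    (Matrix.updateCol (Wpow L m) b fun i => derivative (Wpow L m i b)) =
      Matrix.updateCol (Wpow L (Function.update m b (m b - 1))) b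
        (C ((m b : ℝ)) • fun i => Wpow L (Function.update m b (m b - 1)) i b) := by
  apply Matrix.ext
  intro i j
  rcases eq_or_ne j b with rfl | hj
  · rw [Matrix.updateCol_apply, if_pos rfl, Matrix.updateCol_apply, if_pos rfl]
    show derivative ((fun q : Polynomial ℝ => derivative q)^[(i : ℕ)] (X ^ (m j))) =
      (C ((m j : ℝ)) • fun i : Fin L => Wpow L (Function.update m j (m j - 1)) i j) i
    rw [iterate_deriv_eq, ← Function.iterate_succ_apply' derivative, Function.iterate_succ_apply,
      derivative_X_pow]
    show _ = C ((m j : ℝ)) • Wpow L (Function.update m j (m j - 1)) i j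
    rw [smul_eq_mul]
    show _ = C ((m j : ℝ)) *
      (fun q : Polynomial ℝ => derivative q)^[(i : ℕ)] (X ^ (Function.update m j (m j - 1) j))
    rw [iterate_deriv_eq, Function.update_self, Polynomial.iterate_derivative_C_mul]
  · rw [Matrix.updateCol_apply, if_neg hj, Matrix.updateCol_apply, if_neg hj]
    show (fun q : Polynomial ℝ => derivative q)^[(i : ℕ)] (X ^ (m j)) =
      (fun q : Polynomial ℝ => derivative q)^[(i : ℕ)] (X ^ (Function.update m b (m b - 1) j))
    rw [Function.update_of_ne hj]

lemma key_identity {L : ℕ} (m : Fin L → ℕ) (hsm : StrictMono m) :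
    ((∑ i, m i - ∑ i : Fin L, (i : ℕ) : ℕ) : ℝ) * vprod (fun i => (m i : ℝ)) =
      ∑ b : Fin L, (m b : ℝ) * vprod (fun i => (Function.update m b (m b - 1) i : ℝ)) := by
  classical
  have hCle : ∑ i : Fin L, (i : ℕ) ≤ ∑ i, m i :=
    Finset.sum_le_sum fun i _ => le_of_strictMono hsm i
  have hd := derivative_det (Wpow L m)
  rw [det_Wpow m hCle] at hd
  have hL : derivative (C (vprod fun i => (m i : ℝ)) * X ^ (∑ i, m i - ∑ i : Fin L, (i : ℕ))) =
      C (((∑ i, m i - ∑ i : Fin L, (i : ℕ) : ℕ) : ℝ) * vprod (fun i => (m i : ℝ))) *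
        X ^ (∑ i, m i - ∑ i : Fin L, (i : ℕ) - 1) := by
    rw [Polynomial.derivative_C_mul, derivative_X_pow, ← mul_assoc, ← C_mul, mul_comm (vprod _)]
  have hcol : ∀ b : Fin L,
      ((Wpow L m).updateCol b fun i => derivative (Wpow L m i b)).det =
      C ((m b : ℝ) * vprod (fun i => (Function.update m b (m b - 1) i : ℝ))) *
        X ^ (∑ i, m i - ∑ i : Fin L, (i : ℕ) - 1) := by
    intro b
    rw [wpow_col_update, Matrix.det_updateCol_smul, Matrix.updateCol_eq_self]
    rcases Nat.eq_zero_or_pos (m b) with hmb | hmb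
    · rw [hmb]
      norm_num
    by_cases hdup : ∃ a : Fin L, a ≠ b ∧ m a = m b - 1
    · obtain ⟨a, hab, ha⟩ := hdup
      have haltb : a < b := by
        rw [← hsm.lt_iff_lt]
        omega
      have hdet0 : (Wpow L (Function.update m b (m b - 1))).det = 0 := by
        rw [← Matrix.det_transpose]
        apply Matrix.det_zero_of_row_eq hab
        funext i
        show (Wpow L (Function.update m b (m b - 1))) i a = Wpow L (Function.update m b (m b - 1)) i b
        show (fun q : Polynomial ℝ => derivative q)^[(i : ℕ)] (X ^ (Function.update m b (m b - 1) a)) =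
          (fun q : Polynomial ℝ => derivative q)^[(i : ℕ)] (X ^ (Function.update m b (m b - 1) b))
        rw [Function.update_of_ne hab, Function.update_self, ha]
      have hvp0 : vprod (fun i => (Function.update m b (m b - 1) i : ℝ)) = 0 := by
        apply vprod_eq_zero haltb
        rw [Function.update_of_ne (ne_of_lt haltb), Function.update_self, ha]
      rw [hdet0, hvp0]
      norm_num
    · push_neg at hdup
      have hsm' : StrictMono (Function.update m b (m b - 1)) := by
        intro i j hij
        rcases eq_or_ne i b with rfl | hi
        · rw [Function.update_self, Function.update_of_ne (ne_of_gt hij)]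
          have := hsm hij
          omega
        · rw [Function.update_of_ne hi]
          rcases eq_or_ne j b with rfl | hjb
          · rw [Function.update_self]
            have h1 := hsm hij
            have h2 := hdup i hi
            omega
          · rw [Function.update_of_ne hjb]
            exact hsm hij
      have hsum' : ∑ i, Function.update m b (m b - 1) i = ∑ i, m i - 1 := by
        rw [Finset.sum_update_of_mem (Finset.mem_univ b)]
        have h9 : ∑ x ∈ Finset.univ \ {b}, m x + m b = ∑ i, m i := by
          rw [← Finset.erase_eq, add_comm, Finset.add_sum_erase _ _ (Finset.mem_univ b)]
        omega
      have hCle' : ∑ i : Fin L, (i : ℕ) ≤ ∑ i, Function.update m b (m b - 1) i :=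
        Finset.sum_le_sum fun i _ => le_of_strictMono hsm' i
      rw [det_Wpow _ hCle', hsum']
      rw [← mul_assoc, ← C_mul]
      congr 2
      omega
  rw [hL, Finset.sum_congr rfl (fun b _ => hcol b)] at hd
  rw [← Finset.sum_mul, ← map_sum] at hd
  have hX : (X : Polynomial ℝ) ^ (∑ i, m i - ∑ i : Fin L, (i : ℕ) - 1) ≠ 0 :=
    pow_ne_zero _ X_ne_zero
  exact Polynomial.C_inj.mp ((mul_left_inj' hX).mp hd)

/-! ### Degree vectors and the hook-type scalar formula -/

/-- The increasing degree vector of a partition, at length `L`. -/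
def mvec (L : ℕ) (f : Ptn) : Fin L → ℕ := fun i => f (L - 1 - (i : ℕ)) + (i : ℕ)

lemma mvec_strictMono (h : IsPtn lam) (L : ℕ) : StrictMono (mvec L lam) := by
  intro i j hij
  have hij' : (i : ℕ) < (j : ℕ) := hij
  have h1 := h (show L - 1 - (j : ℕ) ≤ L - 1 - (i : ℕ) by omega)
  simp only [mvec]
  omega

lemma sum_mvec (h : IsPtn lam) {L : ℕ} (hL : plen lam ≤ L) :
    ∑ i, mvec L lam i = psize lam + ∑ i : Fin L, (i : ℕ) := by
  rw [show ∑ i, mvec L lam i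
      = ∑ i : Fin L, lam (L - 1 - (i : ℕ)) + ∑ i : Fin L, (i : ℕ) from Finset.sum_add_distrib]
  congr 1
  rw [Fin.sum_univ_eq_sum_range (fun i => lam (L - 1 - i)) L,
    Finset.sum_range_reflect (fun i => lam i) L]
  exact (psize_eq_sum lam (by rw [support_eq_range h]; exact Finset.range_subset_range.mpr hL)).symm

lemma mvec_zero (L : ℕ) (i : Fin L) : mvec L 0 i = (i : ℕ) := by simp [mvec]

lemma vprod_staircase (L : ℕ) :
    vprod (fun i : Fin L => ((i : ℕ) : ℝ)) = ∏ i : Fin L, ((i : ℕ).factorial : ℝ) := by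
  have h1 := det_Wpow (fun i : Fin L => (i : ℕ)) (le_refl _)
  rw [Nat.sub_self, pow_zero, mul_one] at h1
  have h2 : (Wpow L (fun i : Fin L => (i : ℕ))).det =
      C (∏ i : Fin L, ((i : ℕ).factorial : ℝ)) := by
    rw [Matrix.det_of_upperTriangular (M := Wpow L (fun i : Fin L => (i : ℕ)))
      (fun i j hji => ?_)]
    · rw [map_prod]
      apply Finset.prod_congr rfl
      intro i _
      show (fun q : Polynomial ℝ => derivative q)^[(i : ℕ)] (X ^ (i : ℕ)) = _
      rw [iterate_deriv_eq, Polynomial.iterate_derivative_X_pow_eq_smul, Nat.sub_self, pow_zero,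
        Nat.descFactorial_self, smul_eq_C_mul, mul_one]
    · show (fun q : Polynomial ℝ => derivative q)^[(i : ℕ)] (X ^ (j : ℕ)) = 0
      have hji' : (j : ℕ) < (i : ℕ) := hji
      rw [iterate_deriv_eq, Polynomial.iterate_derivative_X_pow_eq_smul,
        Nat.descFactorial_eq_zero_iff_lt.mpr hji']
      simp
  rw [h2] at h1
  exact (Polynomial.C_inj.mp h1).symm

lemma vprod_pos {L : ℕ} {m : Fin L → ℕ} (h : StrictMono m) :
    0 < vprod (fun i => (m i : ℝ)) := by
  apply Finset.prod_pos
  intro i _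
  apply Finset.prod_pos
  intro j hj
  have h1 := h (Finset.mem_Ioi.mp hj)
  have h2 : (m i : ℝ) < m j := by exact_mod_cast h1
  linarith

lemma prod_Ioi_pairs {L : ℕ} (g : ℕ → ℕ → ℝ) :
    ∏ i : Fin L, ∏ j ∈ Finset.Ioi i, g (i : ℕ) (j : ℕ) =
      ∏ p ∈ (Finset.range L ×ˢ Finset.range L).filter (fun p => p.1 < p.2), g p.1 p.2 := by
  rw [← Finset.prod_sigma Finset.univ (fun i : Fin L => Finset.Ioi i)
    (fun p => g (p.1 : ℕ) (p.2 : ℕ))]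
  apply Finset.prod_bij (fun p _ => ((p.1 : ℕ), (p.2 : ℕ)))
  · rintro ⟨i, j⟩ hp
    simp only [Finset.mem_sigma, Finset.mem_univ, Finset.mem_Ioi, true_and] at hp
    simp only [Finset.mem_filter, Finset.mem_product, Finset.mem_range]
    exact ⟨⟨i.isLt, j.isLt⟩, hp⟩
  · rintro ⟨i1, j1⟩ h1 ⟨i2, j2⟩ h2 heq
    simp only [Prod.mk.injEq] at heq
    have hi : i1 = i2 := Fin.ext heq.1
    subst hi
    exact congrArg (Sigma.mk i1) (Fin.ext heq.2)
  · rintro ⟨a, b⟩ hab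
    simp only [Finset.mem_filter, Finset.mem_product, Finset.mem_range] at hab
    refine ⟨⟨⟨a, hab.1.1⟩, ⟨b, hab.1.2⟩⟩, ?_, rfl⟩
    simp only [Finset.mem_sigma, Finset.mem_univ, Finset.mem_Ioi, true_and]
    exact Fin.mk_lt_mk.mpr hab.2
  · intros
    rfl

lemma vand_eq (lam : Ptn) :
    vand lam = vprod (fun i : Fin (plen lam) => ((mvec (plen lam) lam i : ℕ) : ℝ)) := by
  rw [vand, vprod]
  have h := prod_Ioi_pairs (L := plen lam)
    (fun a b => ((degv lam b : ℕ) : ℝ) - ((degv lam a : ℕ) : ℝ))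
  rw [← h]
  rfl

lemma plen_dec_le (f : Ptn) (k : ℕ) : plen (dec f k) ≤ plen f := by
  apply Finset.card_le_card
  intro j hj
  rw [Finsupp.mem_support_iff] at hj ⊢
  have := dec_le f k j
  omega

lemma plen_pos (h : IsPtn lam) (hpos : psize lam ≠ 0) : 0 < plen lam := by
  rcases Nat.eq_zero_or_pos (plen lam) with h0 | h0
  · exfalso
    apply hpos
    have : lam = 0 := by
      ext i
      have : ¬(i < plen lam) := by omega
      rw [lt_plen_iff h] at this
      simpa using this
    rw [this, psize_zero]
  · exact h0

lemma one_le_f_of_Rset (h : IsPtn lam) {k : ℕ} (hk : k ∈ Rset lam) : 1 ≤ lam k := by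
  have := (mem_Rset h).mp hk
  omega

lemma scalar_formula : ∀ (n : ℕ) (f : Ptn), IsPtn f → psize f = n → ∀ L, plen f ≤ L →
    (F f : ℝ) * ∏ i, ((mvec L f i).factorial : ℝ) =
      (n.factorial : ℝ) * vprod (fun i => (mvec L f i : ℝ)) := by
  intro n
  induction n with
  | zero =>
    intro f hf hsz L hL
    obtain rfl := eq_zero_of_psize hsz
    rw [F_zero]
    simp only [mvec_zero]
    rw [vprod_staircase]
    norm_num
  | succ n ih =>
    intro f hf hsz L hL
    have hplen : 0 < plen f := plen_pos hf (by omega)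
    have hL1 : 1 ≤ L := le_trans hplen hL
    set m := mvec L f with hm
    have hsm : StrictMono m := mvec_strictMono hf L
    have hmb1 : ∀ k ∈ Rset f, 1 ≤ f k := fun k hk => one_le_f_of_Rset hf hk
    have hkey := key_identity m hsm
    have hsum : ∑ i, m i = (n + 1) + ∑ i : Fin L, (i : ℕ) := by
      rw [hm, sum_mvec hf hL, hsz]
    rw [show (∑ i, m i - ∑ i : Fin L, (i : ℕ)) = n + 1 from by omega] at hkey
    -- the reflection map
    set ee : ℕ → Fin L := fun k => ⟨L - 1 - k, by omega⟩ with hee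
    have hval : ∀ k, ((ee k : ℕ)) = L - 1 - k := fun k => rfl
    -- (c1) : decremented partitions correspond to updated vectors
    have hc1 : ∀ k ∈ Rset f, mvec L (dec f k) =
        Function.update m (ee k) (m (ee k) - 1) := by
      intro k hk
      have hkp : k < plen f := (Finset.mem_filter.mp hk).1 |> Finset.mem_range.mp
      have hkL : k ≤ L - 1 := by omega
      funext i
      rcases eq_or_ne i (ee k) with rfl | hi
      · rw [Function.update_self]
        show dec f k (L - 1 - ((ee k : ℕ))) + ((ee k : ℕ)) = _
        rw [hval, show L - 1 - (L - 1 - k) = k from by omega, dec_apply, if_pos rfl]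
        have h1 : m (ee k) = f (L - 1 - ((ee k : ℕ))) + ((ee k : ℕ)) := rfl
        rw [hval, show L - 1 - (L - 1 - k) = k from by omega] at h1
        have h2 := hmb1 k hk
        omega
      · rw [Function.update_of_ne hi]
        show dec f k (L - 1 - (i : ℕ)) + (i : ℕ) = m i
        rw [dec_apply, if_neg ?_]
        · rfl
        · intro hcon
          apply hi
          apply Fin.ext
          rw [hval]
          have hiL : (i : ℕ) < L := i.isLt
          omega
    -- (c2) : off-image terms vanish
    have himg : ∑ b : Fin L, (m b : ℝ) *
          vprod (fun i => (Function.update m b (m b - 1) i : ℝ)) =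
        ∑ k ∈ Rset f, (m (ee k) : ℝ) *
          vprod (fun i => (Function.update m (ee k) (m (ee k) - 1) i : ℝ)) := by
      have hinj : ∀ k1 ∈ Rset f, ∀ k2 ∈ Rset f, ee k1 = ee k2 → k1 = k2 := by
        intro k1 hk1 k2 hk2 h12
        have h1 : k1 < plen f := (Finset.mem_filter.mp hk1).1 |> Finset.mem_range.mp
        have h2 : k2 < plen f := (Finset.mem_filter.mp hk2).1 |> Finset.mem_range.mp
        have := congrArg (fun x : Fin L => (x : ℕ)) h12
        simp only [hval] at this
        omega
      rw [← Finset.sum_image (f := fun b : Fin L => (m b : ℝ) *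
        vprod (fun i => (Function.update m b (m b - 1) i : ℝ))) (g := ee) hinj]
      symm
      apply Finset.sum_subset (Finset.subset_univ _)
      intro b _ hb
      set k := L - 1 - (b : ℕ) with hkdef
      have hbk : b = ee k := by
        apply Fin.ext
        rw [hval]
        have := b.isLt
        omega
      have hknotin : k ∉ Rset f := by
        intro hkin
        apply hb
        exact Finset.mem_image.mpr ⟨k, hkin, hbk.symm⟩
      have hfk : f k = f (k + 1) := by
        have h1 : ¬(f (k + 1) < f k) := by
          intro hcon
          exact hknotin ((mem_Rset hf).mpr hcon)
        have h2 : f (k + 1) ≤ f k := hf (Nat.le_succ k)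
        omega
      rcases Nat.eq_zero_or_pos (b : ℕ) with hb0 | hb0
      · -- b = 0 : leading coefficient m b = 0
        have hkL : k = L - 1 := by omega
        have hfL : f L = 0 := by
          have h7 : ¬(L < plen f) := by omega
          rw [lt_plen_iff hf] at h7
          simpa using h7
        have hfk0 : f k = 0 := by
          have h3 : f (k + 1) ≤ f L := by
            rcases Nat.lt_or_ge (k + 1) L with hlt | hge
            · exact hf (by omega)
            · have h8 : k + 1 = L := by omega
              rw [h8]
          omega
        have hmb : m b = 0 := by
          show f (L - 1 - (b : ℕ)) + (b : ℕ) = 0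
          rw [← hkdef]
          omega
        rw [hmb]
        norm_num
      · -- b ≥ 1 : duplicate entries
        have hbL : (b : ℕ) < L := b.isLt
        set a : Fin L := ⟨(b : ℕ) - 1, by omega⟩ with ha
        have hab : a < b := by
          rw [Fin.lt_def]
          show (b : ℕ) - 1 < (b : ℕ)
          omega
        have harg : L - 1 - ((b : ℕ) - 1) = k + 1 := by omega
        have hma : m a = f (k + 1) + ((b : ℕ) - 1) := by
          show f (L - 1 - ((a : ℕ))) + ((a : ℕ)) = _
          have hva : (a : ℕ) = (b : ℕ) - 1 := rfl
          rw [hva, harg]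
        have hmb2 : m b = f k + (b : ℕ) := by
          show f (L - 1 - ((b : ℕ))) + ((b : ℕ)) = _
          rw [← hkdef]
        have hcast : m a = m b - 1 := by omega
        have hzero : vprod (fun i => (Function.update m b (m b - 1) i : ℝ)) = 0 := by
          apply vprod_eq_zero hab
          rw [Function.update_of_ne (ne_of_lt hab), Function.update_self]
          exact Nat.cast_inj.mpr hcast
        rw [hzero]
        norm_num
    -- the factorial bookkeeping
    have hfact : ∀ k ∈ Rset f, ∏ i, ((m i).factorial : ℝ) =
        (m (ee k) : ℝ) * ∏ i, ((mvec L (dec f k) i).factorial : ℝ) := by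
      intro k hk
      rw [hc1 k hk]
      have hupd : (fun i => ((Function.update m (ee k) (m (ee k) - 1) i).factorial : ℝ)) =
          Function.update (fun i => ((m i).factorial : ℝ)) (ee k)
            (((m (ee k) - 1).factorial : ℝ)) := by
        funext i
        rcases eq_or_ne i (ee k) with rfl | hi
        · rw [Function.update_self, Function.update_self]
        · rw [Function.update_of_ne hi, Function.update_of_ne hi]
      rw [hupd, Finset.prod_update_of_mem (Finset.mem_univ _)]
      rw [← Finset.mul_prod_erase Finset.univ (fun i => ((m i).factorial : ℝ))
        (Finset.mem_univ (ee k))]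
      rw [← mul_assoc]
      congr 1
      · have hm1 : 1 ≤ m (ee k) := by
          have h3 := hmb1 k hk
          have h4 : f k ≤ m (ee k) := by
            have h5 : m (ee k) = f (L - 1 - ((ee k : ℕ))) + ((ee k : ℕ)) := rfl
            have hkp : k < plen f := (Finset.mem_filter.mp hk).1 |> Finset.mem_range.mp
            rw [hval, show L - 1 - (L - 1 - k) = k from by omega] at h5
            omega
          omega
        have h6 := Nat.mul_factorial_pred (Nat.one_le_iff_ne_zero.mp hm1)
        push_cast [← h6]
        ring
      · rw [Finset.erase_eq]
    -- assemble
    have hF := F_rec hf (by omega)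
    calc (F f : ℝ) * ∏ i, ((m i).factorial : ℝ)
        = (∑ k ∈ Rset f, (F (dec f k) : ℝ)) * ∏ i, ((m i).factorial : ℝ) := by
          rw [hF]
          push_cast
          ring
      _ = ∑ k ∈ Rset f, (F (dec f k) : ℝ) * ∏ i, ((m i).factorial : ℝ) :=
          Finset.sum_mul _ _ _
      _ = ∑ k ∈ Rset f, (m (ee k) : ℝ) *
            ((F (dec f k) : ℝ) * ∏ i, ((mvec L (dec f k) i).factorial : ℝ)) := by
          refine Finset.sum_congr rfl fun k hk => ?_
          rw [hfact k hk]
          ring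
      _ = ∑ k ∈ Rset f, (m (ee k) : ℝ) *
            ((n.factorial : ℝ) * vprod (fun i => (mvec L (dec f k) i : ℝ))) := by
          refine Finset.sum_congr rfl fun k hk => ?_
          have hkR : f (k + 1) < f k := (mem_Rset hf).mp hk
          have hdps : psize (dec f k) = n := by
            have := psize_dec hf hkR
            omega
          rw [ih (dec f k) (isPtn_dec hf hkR) hdps L (le_trans (plen_dec_le f k) hL)]
      _ = (n.factorial : ℝ) * ∑ k ∈ Rset f, (m (ee k) : ℝ) *
            vprod (fun i => (mvec L (dec f k) i : ℝ)) := by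
          rw [Finset.mul_sum]
          refine Finset.sum_congr rfl fun k hk => ?_
          ring
      _ = (n.factorial : ℝ) * (((n : ℝ) + 1) * vprod (fun i => (m i : ℝ))) := by
          congr 1
          have : ∑ k ∈ Rset f, (m (ee k) : ℝ) * vprod (fun i => (mvec L (dec f k) i : ℝ)) =
              ∑ k ∈ Rset f, (m (ee k) : ℝ) *
                vprod (fun i => (Function.update m (ee k) (m (ee k) - 1) i : ℝ)) := by
            refine Finset.sum_congr rfl fun k hk => ?_
            rw [hc1 k hk]
          rw [this, ← himg, ← hkey]
          push_cast
          ring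
      _ = ((n + 1).factorial : ℝ) * vprod (fun i => (m i : ℝ)) := by
          rw [Nat.factorial_succ]
          push_cast
          ring

/-! ### Appell sequences -/

lemma iterate_deriv_appell {A : ℕ → Polynomial ℝ} (hA : IsAppell A) (k n : ℕ) :
    derivative^[k] (A n) = (n.descFactorial k) • A (n - k) := by
  induction k generalizing n with
  | zero => simp
  | succ k ihk =>
    rw [Function.iterate_succ_apply]
    rcases Nat.eq_zero_or_pos n with rfl | hn
    · rw [hA.1, derivative_one]
      rw [show (derivative^[k] (0 : Polynomial ℝ)) = 0 from Polynomial.iterate_derivative_zero]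
      rw [Nat.zero_descFactorial_succ, zero_smul]
    · obtain ⟨n', rfl⟩ : ∃ n', n = n' + 1 := ⟨n - 1, by omega⟩
      rw [hA.2 (n' + 1) (by omega), show (n' + 1 - 1) = n' from rfl]
      rw [Polynomial.iterate_derivative_smul, ihk, smul_smul]
      rw [← Nat.succ_descFactorial_succ, Nat.succ_sub_succ]

/-- Normalised extended Appell polynomials `A_k / k!`. -/
def Bz (A : ℕ → Polynomial ℝ) (k : ℤ) : Polynomial ℝ :=
  if k < 0 then 0 else ((k.toNat.factorial : ℝ))⁻¹ • A k.toNat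

lemma wronskian_entry {A : ℕ → Polynomial ℝ} (hA : IsAppell A) (n j : ℕ) :
    derivative^[j] (A n) = ((n.factorial : ℝ)) • Bz A ((n : ℤ) - j) := by
  rw [iterate_deriv_appell hA]
  rcases le_or_gt j n with hle | hlt
  · rw [Bz, if_neg (by omega)]
    have htn : ((n : ℤ) - j).toNat = n - j := by omega
    rw [htn, smul_smul, ← Nat.cast_smul_eq_nsmul ℝ]
    congr 1
    have hfd := Nat.factorial_mul_descFactorial hle
    have hne : ((n - j).factorial : ℝ) ≠ 0 := Nat.cast_ne_zero.mpr (Nat.factorial_ne_zero _)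
    field_simp
    exact_mod_cast (mul_comm ((n - j).factorial) (n.descFactorial j)) ▸ hfd
  · rw [Nat.descFactorial_eq_zero_iff_lt.mpr hlt, zero_smul, Bz, if_pos (by omega), smul_zero]

lemma aeval_hz {A : ℕ → Polynomial ℝ} (hA : IsAppell A) (k : ℤ) :
    MvPolynomial.aeval (fun m : ℕ => (((m + 1).factorial : ℝ))⁻¹ • A (m + 1)) (hz k) = Bz A k := by
  rcases lt_or_ge k 0 with hneg | hpos
  · rw [hz, if_pos hneg, Bz, if_pos hneg, map_zero]
  · rw [hz, if_neg (not_lt.mpr hpos), Bz, if_neg (not_lt.mpr hpos)]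
    rcases Nat.eq_zero_or_pos k.toNat with h0 | h0
    · rw [h0, hsym, if_pos rfl, _root_.map_one, Nat.factorial_zero, hA.1]
      norm_num
    · rw [hsym, if_neg (by omega), MvPolynomial.aeval_X]
      have hk1 : k.toNat - 1 + 1 = k.toNat := by omega
      rw [hk1]

theorem main (A : ℕ → Polynomial ℝ) (hA : IsAppell A) (lam : Ptn)
    (h : IsPtn lam) :
    MvPolynomial.aeval (fun m : ℕ => (((m + 1).factorial : ℝ))⁻¹ • A (m + 1))
        (schur lam) =
      ((F lam : ℝ) / ((psize lam).factorial : ℝ)) • wap A lam := by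
  classical
  -- abbreviations
  have hLHS : MvPolynomial.aeval (fun m : ℕ => (((m + 1).factorial : ℝ))⁻¹ • A (m + 1))
      (schur lam) =
      Matrix.det (Matrix.of fun i j : Fin (plen lam) =>
        Bz A ((mvec (plen lam) lam i : ℤ) - (j : ℕ))) := by
    rw [schur, AlgHom.map_det]
    have hmap : (MvPolynomial.aeval
          (fun m : ℕ => (((m + 1).factorial : ℝ))⁻¹ • A (m + 1))).mapMatrix
        (Matrix.of fun i j : Fin (plen lam) =>
          hz ((lam (i : ℕ) : ℤ) - (i : ℕ) + (j : ℕ))) =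
        Matrix.of fun i j : Fin (plen lam) =>
          Bz A ((lam (i : ℕ) : ℤ) - (i : ℕ) + (j : ℕ)) := by
      rw [AlgHom.mapMatrix_apply]
      apply Matrix.ext
      intro i j
      exact aeval_hz hA _
    rw [hmap]
    rw [← Matrix.det_submatrix_equiv_self Fin.revPerm (Matrix.of fun i j : Fin (plen lam) =>
      Bz A ((lam (i : ℕ) : ℤ) - (i : ℕ) + (j : ℕ)))]
    congr 1
    apply Matrix.ext
    intro i j
    show Bz A ((lam ((Fin.rev i : Fin (plen lam)) : ℕ) : ℤ) - ((Fin.rev i : Fin (plen lam)) : ℕ)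
        + ((Fin.rev j : Fin (plen lam)) : ℕ)) = Bz A ((mvec (plen lam) lam i : ℤ) - (j : ℕ))
    have hvi : ((Fin.rev i : Fin (plen lam)) : ℕ) = plen lam - ((i : ℕ) + 1) := rfl
    have hvj : ((Fin.rev j : Fin (plen lam)) : ℕ) = plen lam - ((j : ℕ) + 1) := rfl
    have hiL : (i : ℕ) < plen lam := i.isLt
    have hjL : (j : ℕ) < plen lam := j.isLt
    rw [hvi, hvj]
    congr 1
    have hidx : plen lam - ((i : ℕ) + 1) = plen lam - 1 - (i : ℕ) := by omega
    rw [hidx]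
    show _ = ((lam (plen lam - 1 - (i : ℕ)) + (i : ℕ) : ℕ) : ℤ) - ((j : ℕ) : ℤ)
    push_cast
    omega
  rw [hLHS, wap, WAPpr.wronskian]
  have hent : (Matrix.of fun i j : Fin (plen lam) =>
      (fun q : Polynomial ℝ => Polynomial.derivative q)^[(j : ℕ)] (A (degv lam (i : ℕ)))) =
      Matrix.of fun i j : Fin (plen lam) =>
        Polynomial.C (((mvec (plen lam) lam i).factorial : ℝ)) *
          (Matrix.of fun i' j' : Fin (plen lam) =>
            Bz A ((mvec (plen lam) lam i' : ℤ) - (j' : ℕ))) i j := by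
    apply Matrix.ext
    intro i j
    show (fun q : Polynomial ℝ => Polynomial.derivative q)^[(j : ℕ)] (A (degv lam (i : ℕ))) = _
    rw [iterate_deriv_eq, wronskian_entry hA, Polynomial.smul_eq_C_mul]
    rfl
  rw [hent, Matrix.det_mul_column, ← map_prod]
  -- now everything is a scalar multiple of the same determinant
  set D := Matrix.det (Matrix.of fun i j : Fin (plen lam) =>
    Bz A ((mvec (plen lam) lam i : ℤ) - (j : ℕ))) with hD
  set P := ∏ i : Fin (plen lam), ((mvec (plen lam) lam i).factorial : ℝ) with hP
  rw [← Polynomial.smul_eq_C_mul, smul_smul, smul_smul]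
  have hscal : (F lam : ℝ) * P = ((psize lam).factorial : ℝ) * vand lam := by
    rw [vand_eq]
    exact scalar_formula (psize lam) lam h rfl (plen lam) (le_refl _)
  have hvand : 0 < vand lam := by
    rw [vand_eq]
    exact vprod_pos (mvec_strictMono h (plen lam))
  have hNfac : ((psize lam).factorial : ℝ) ≠ 0 := Nat.cast_ne_zero.mpr (Nat.factorial_ne_zero _)
  have hcoef : (F lam : ℝ) / ((psize lam).factorial : ℝ) * (vand lam)⁻¹ * P = 1 := by
    have hvne : vand lam ≠ 0 := ne_of_gt hvand
    field_simp
    linarith [hscal]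
  rw [hcoef, one_smul]

end WAPaux

end

open WAPpr in
/-- the homomorphism `φ_A : Λ → ℝ[x]` with `φ_A(h_m) = A_m/m!`
sends `s_λ` to `F_λ A_λ / |λ|!`. -/
theorem phi_schur (A : ℕ → Polynomial ℝ) (hA : IsAppell A) (lam : Ptn)
    (h : IsPtn lam) :
    MvPolynomial.aeval (fun m : ℕ => (((m + 1).factorial : ℝ))⁻¹ • A (m + 1))
        (schur lam) =
      ((F lam : ℝ) / ((psize lam).factorial : ℝ)) • wap A lam :=
  WAPaux.main A hA lam h
end

section
/- For every partition λ of length r with degree vector (n_1,...,n_r), the Wronskian Appell polynomial A_λ = Wr[A_{n_1},...,A_{n_r}] / ∏_{i<j}(n_j − n_i) is a monic polynomial of degree |λ|. -/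
open scoped BigOperators

namespace WAPprAux

open WAPpr Polynomial Finset

theorem appell_coeff (A : ℕ → Polynomial ℝ) (hA : IsAppell A) :
    ∀ n : ℕ, (A n).coeff n = 1 ∧ ∀ m : ℕ, n < m → (A n).coeff m = 0 := by
  intro n
  induction n with
  | zero =>
    constructor
    · simp [hA.1]
    · intro m hm; rw [hA.1, coeff_one, if_neg (by omega)]
  | succ n ih =>
    have hd : Polynomial.derivative (A (n + 1)) = Polynomial.C ((n:ℝ) + 1) * A n := by
      rw [hA.2 (n + 1) (Nat.succ_le_succ (Nat.zero_le n))]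
      rw [← Nat.cast_smul_eq_nsmul ℝ, smul_eq_C_mul]
      push_cast
      simp
    have key : ∀ k : ℕ, (A (n+1)).coeff (k+1) * ((k:ℝ)+1) = ((n:ℝ) + 1) * (A n).coeff k := by
      intro k
      have := congrArg (fun p => Polynomial.coeff p k) hd
      simp only [coeff_derivative, coeff_C_mul] at this
      exact this
    have hne : ((n:ℝ) + 1) ≠ 0 := by positivity
    constructor
    · have := key n
      rw [ih.1, mul_one] at this
      exact mul_right_cancel₀ hne (by rw [one_mul]; exact this)
    · intro m hm
      obtain ⟨k, rfl⟩ : ∃ k, m = (n + 1 + k) + 1 := ⟨m - n - 2, by omega⟩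
      have := key (n + 1 + k)
      rw [ih.2 _ (by omega), mul_zero] at this
      have hne2 : ((n:ℝ) + 1 + k + 1) ≠ 0 := by positivity
      refine (mul_eq_zero.mp this).resolve_right (by push_cast; exact hne2)

theorem appell_natDegree (A : ℕ → Polynomial ℝ) (hA : IsAppell A) (n : ℕ) :
    (A n).natDegree = n := by
  obtain ⟨h1, h2⟩ := appell_coeff A hA n
  refine le_antisymm (natDegree_le_iff_coeff_eq_zero.mpr h2) ?_
  exact le_natDegree_of_ne_zero (h1 ▸ one_ne_zero)

theorem appell_monic (A : ℕ → Polynomial ℝ) (hA : IsAppell A) (n : ℕ) :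
    (A n).Monic := by
  have := appell_natDegree A hA n
  unfold Polynomial.Monic Polynomial.leadingCoeff
  rw [this, (appell_coeff A hA n).1]

theorem iter_deriv_smul (c : ℝ) (p : Polynomial ℝ) (j : ℕ) :
    (fun q => Polynomial.derivative q)^[j] (c • p)
      = c • (fun q => Polynomial.derivative q)^[j] p := by
  induction j generalizing p with
  | zero => rfl
  | succ j ih => rw [Function.iterate_succ_apply, Function.iterate_succ_apply,
      derivative_smul, ih]

theorem appell_iter (A : ℕ → Polynomial ℝ) (hA : IsAppell A) :
    ∀ (j n : ℕ), (fun q => Polynomial.derivative q)^[j] (A n)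
      = ((n.descFactorial j : ℝ)) • A (n - j) := by
  intro j
  induction j with
  | zero => intro n; simp
  | succ j ih =>
    intro n
    rw [Function.iterate_succ_apply]
    match n with
    | 0 =>
      have : Polynomial.derivative (A 0) = 0 := by rw [hA.1]; simp
      simp only [this]
      rw [Function.iterate_fixed (by simp) j]
      simp [Nat.descFactorial_eq_zero_iff_lt.mpr (Nat.succ_pos j)]
    | (m+1) =>
      have hd : Polynomial.derivative (A (m+1)) = ((m+1 : ℕ) : ℝ) • A m := by
        rw [hA.2 (m+1) (Nat.succ_le_succ (Nat.zero_le m))]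
        rw [← Nat.cast_smul_eq_nsmul ℝ]
        push_cast
        ring_nf
      rw [hd, iter_deriv_smul, ih, smul_smul, Nat.succ_sub_succ]
      congr 1
      rw [Nat.succ_descFactorial_succ]
      push_cast
      ring

theorem supp_subset (lam : Ptn) (h : IsPtn lam) :
    lam.support ⊆ Finset.range (plen lam) := by
  intro a ha
  rw [Finset.mem_range]
  have h1 : Finset.range (a + 1) ⊆ lam.support := by
    intro b hb
    rw [Finset.mem_range] at hb
    rw [Finsupp.mem_support_iff]
    have h2 := h (Nat.lt_succ_iff.mp hb)
    have ha' := Finsupp.mem_support_iff.mp ha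
    omega
  have h3 := Finset.card_le_card h1
  rw [Finset.card_range] at h3
  exact h3

theorem psize_eq (lam : Ptn) (h : IsPtn lam) :
    psize lam = ∑ i ∈ Finset.range (plen lam), lam i := by
  rw [psize]
  exact Finsupp.sum_of_support_subset lam (supp_subset lam h) _ (fun i _ => rfl)

theorem sum_degv (lam : Ptn) (h : IsPtn lam) :
    ∑ i ∈ Finset.range (plen lam), degv lam i
      = psize lam + ∑ i ∈ Finset.range (plen lam), i := by
  have : ∀ i, degv lam i = lam (plen lam - 1 - i) + i := fun i => rfl
  simp only [this]
  rw [Finset.sum_add_distrib, Finset.sum_range_reflect (fun i => lam i) (plen lam),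
    ← psize_eq lam h]

theorem degv_lt (lam : Ptn) (h : IsPtn lam) {a b : ℕ} (hab : a < b) :
    degv lam a < degv lam b := by
  have h2 := h (show plen lam - 1 - b ≤ plen lam - 1 - a by omega)
  unfold degv
  omega

theorem pair_prod (r : ℕ) (g : ℕ → ℕ → ℝ) :
    ∏ p ∈ (Finset.range r ×ˢ Finset.range r).filter (fun p => p.1 < p.2), g p.1 p.2
      = ∏ i : Fin r, ∏ j ∈ Finset.Ioi i, g i j := by
  rw [Finset.prod_filter, Finset.prod_product,
    ← Fin.prod_univ_eq_prod_range (fun a => ∏ b ∈ Finset.range r, if a < b then g a b else 1) r]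
  refine Finset.prod_congr rfl fun i _ => ?_
  rw [← Fin.prod_univ_eq_prod_range (fun b => if (i : ℕ) < b then g i b else 1) r,
    ← Finset.prod_filter]
  refine Finset.prod_congr ?_ fun j _ => rfl
  ext j
  simp only [Finset.mem_filter, Finset.mem_univ, true_and, Finset.mem_Ioi, Fin.lt_def]

theorem vand_eq_det (lam : Ptn) :
    vand lam = Matrix.det (Matrix.vandermonde fun i : Fin (plen lam) => (degv lam i : ℝ)) := by
  rw [Matrix.det_vandermonde]
  exact pair_prod (plen lam) fun a b => ((degv lam b : ℝ) - (degv lam a : ℝ))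

theorem vand_pos (lam : Ptn) (h : IsPtn lam) : 0 < vand lam := by
  rw [vand]
  refine Finset.prod_pos fun p hp => ?_
  rw [Finset.mem_filter] at hp
  have := degv_lt lam h hp.2
  have := Nat.cast_lt (α := ℝ) |>.mpr this
  linarith

end WAPprAux

open WAPpr in
/-- the Wronskian Appell polynomial `A_λ` is monic of
degree `|λ|`. -/
theorem wap_monic (A : ℕ → Polynomial ℝ) (hA : IsAppell A) (lam : Ptn)
    (h : IsPtn lam) :
    (wap A lam).Monic ∧ (wap A lam).degree = psize lam := by
  classical
  obtain ⟨hmain, hcoeffN⟩ :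
      (wronskian (plen lam) fun i => A (degv lam i)).degree ≤ (psize lam : WithBot ℕ) ∧
      (wronskian (plen lam) fun i => A (degv lam i)).coeff (psize lam) = vand lam := by
    have hTfact : ∀ σ : Equiv.Perm (Fin (plen lam)),
        (∏ i : Fin (plen lam),
            (((degv lam (σ i)).descFactorial (i : ℕ) : ℝ) • A (degv lam (σ i) - (i : ℕ)))).degree
            ≤ (psize lam : WithBot ℕ) ∧
        (∏ i : Fin (plen lam),
            (((degv lam (σ i)).descFactorial (i : ℕ) : ℝ) • A (degv lam (σ i) - (i : ℕ)))).coeff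
            (psize lam)
          = ∏ i : Fin (plen lam), ((degv lam (σ i)).descFactorial (i : ℕ) : ℝ) := by
      intro σ
      by_cases hgood : ∀ i : Fin (plen lam), (i : ℕ) ≤ degv lam (σ i)
      · have hsum : ∑ i : Fin (plen lam), (degv lam (σ i) - (i : ℕ)) = psize lam := by
          rw [Finset.sum_tsub_distrib _ (fun i _ => hgood i),
            Equiv.sum_comp σ (fun i : Fin (plen lam) => degv lam (i : ℕ)),
            Fin.sum_univ_eq_sum_range (fun i => degv lam i) (plen lam),
            Fin.sum_univ_eq_sum_range (fun i => i) (plen lam),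
            WAPprAux.sum_degv lam h, Nat.add_sub_cancel]
        have hQmonic : (∏ i : Fin (plen lam), A (degv lam (σ i) - (i : ℕ))).Monic :=
          Polynomial.monic_prod_of_monic _ _ fun i _ => WAPprAux.appell_monic A hA _
        have hQdeg : (∏ i : Fin (plen lam), A (degv lam (σ i) - (i : ℕ))).natDegree
            = psize lam := by
          rw [Polynomial.natDegree_prod _ _
            (fun i _ => (WAPprAux.appell_monic A hA _).ne_zero), ← hsum]
          exact Finset.sum_congr rfl fun i _ => WAPprAux.appell_natDegree A hA _
        have hTsplit : (∏ i : Fin (plen lam),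
              (((degv lam (σ i)).descFactorial (i : ℕ) : ℝ) • A (degv lam (σ i) - (i : ℕ))))
            = Polynomial.C (∏ i : Fin (plen lam), ((degv lam (σ i)).descFactorial (i : ℕ) : ℝ))
              * ∏ i : Fin (plen lam), A (degv lam (σ i) - (i : ℕ)) := by
          simp_rw [Polynomial.smul_eq_C_mul]
          rw [Finset.prod_mul_distrib, map_prod]
        constructor
        · rw [hTsplit]
          refine le_trans (Polynomial.degree_mul_le _ _) ?_
          have h1 : (∏ i : Fin (plen lam), A (degv lam (σ i) - (i : ℕ))).degree
              ≤ (psize lam : WithBot ℕ) := hQdeg ▸ Polynomial.degree_le_natDegree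
          calc _ ≤ 0 + (psize lam : WithBot ℕ) :=
                add_le_add Polynomial.degree_C_le h1
            _ = (psize lam : WithBot ℕ) := zero_add _
        · rw [hTsplit, Polynomial.coeff_C_mul, ← hQdeg, Polynomial.coeff_natDegree,
            hQmonic.leadingCoeff, mul_one]
      · push_neg at hgood
        obtain ⟨i0, hi0⟩ := hgood
        have hci0 : ((degv lam (σ i0)).descFactorial (i0 : ℕ) : ℝ) = 0 := by
          rw [Nat.cast_eq_zero, Nat.descFactorial_eq_zero_iff_lt]
          exact hi0
        have hT0 : (∏ i : Fin (plen lam),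
              (((degv lam (σ i)).descFactorial (i : ℕ) : ℝ) • A (degv lam (σ i) - (i : ℕ)))) = 0 :=
          Finset.prod_eq_zero (Finset.mem_univ i0) (by rw [hci0, zero_smul])
        have hc0 : (∏ i : Fin (plen lam), ((degv lam (σ i)).descFactorial (i : ℕ) : ℝ)) = 0 :=
          Finset.prod_eq_zero (Finset.mem_univ i0) hci0
        rw [hT0, hc0]
        exact ⟨by simp, by simp⟩
    have hWr : (wronskian (plen lam) fun i => A (degv lam i))
        = ∑ σ : Equiv.Perm (Fin (plen lam)),
            Polynomial.C (((Equiv.Perm.sign σ : ℤ) : ℝ))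
              * ∏ i : Fin (plen lam),
                (((degv lam (σ i)).descFactorial (i : ℕ) : ℝ) • A (degv lam (σ i) - (i : ℕ))) := by
      rw [wronskian, Matrix.det_apply']
      refine Finset.sum_congr rfl fun σ _ => ?_
      rw [Polynomial.C_eq_intCast]
      congr 1
      refine Finset.prod_congr rfl fun i _ => ?_
      exact WAPprAux.appell_iter A hA (i : ℕ) (degv lam (σ i))
    constructor
    · rw [hWr]
      refine le_trans (Polynomial.degree_sum_le _ _) ?_
      rw [Finset.sup_le_iff]
      intro σ _
      refine le_trans (Polynomial.degree_mul_le _ _) ?_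
      calc _ ≤ 0 + (psize lam : WithBot ℕ) :=
            add_le_add Polynomial.degree_C_le (hTfact σ).1
        _ = (psize lam : WithBot ℕ) := zero_add _
    · rw [hWr, Polynomial.finset_sum_coeff]
      have hstep : ∀ σ : Equiv.Perm (Fin (plen lam)),
          (Polynomial.C (((Equiv.Perm.sign σ : ℤ) : ℝ))
            * ∏ i : Fin (plen lam),
              (((degv lam (σ i)).descFactorial (i : ℕ) : ℝ)
                • A (degv lam (σ i) - (i : ℕ)))).coeff (psize lam)
          = ((Equiv.Perm.sign σ : ℤ) : ℝ)
            * ∏ i : Fin (plen lam), ((degv lam (σ i)).descFactorial (i : ℕ) : ℝ) := by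
        intro σ
        rw [Polynomial.coeff_C_mul, (hTfact σ).2]
      rw [Finset.sum_congr rfl fun σ _ => hstep σ]
      have hdet : (∑ σ : Equiv.Perm (Fin (plen lam)),
            ((Equiv.Perm.sign σ : ℤ) : ℝ)
              * ∏ i : Fin (plen lam), ((degv lam (σ i)).descFactorial (i : ℕ) : ℝ))
          = Matrix.det (Matrix.of fun i j : Fin (plen lam) =>
              ((degv lam i).descFactorial (j : ℕ) : ℝ)) := by
        rw [Matrix.det_apply']
        rfl
      rw [hdet]
      have h1 : (Matrix.of fun i j : Fin (plen lam) => ((degv lam i).descFactorial (j : ℕ) : ℝ))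
          = Matrix.of fun i j : Fin (plen lam) =>
              (descPochhammer ℝ (j : ℕ)).eval ((degv lam i : ℕ) : ℝ) := by
        ext i j
        rw [Matrix.of_apply, Matrix.of_apply, descPochhammer_eval_eq_descFactorial]
      rw [h1, ← Matrix.det_eval_matrixOfPolynomials_eq_det_vandermonde
        (fun i : Fin (plen lam) => ((degv lam i : ℕ) : ℝ))
        (fun j => descPochhammer ℝ (j : ℕ))
        (fun j => descPochhammer_natDegree ℝ (j : ℕ))
        (fun j => monic_descPochhammer ℝ _), ← WAPprAux.vand_eq_det lam]
  have hvand : vand lam ≠ 0 := ne_of_gt (WAPprAux.vand_pos lam h)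
  have hPdeg : (wronskian (plen lam) fun i => A (degv lam i)).degree = (psize lam : WithBot ℕ) :=
    le_antisymm hmain (Polynomial.le_degree_of_ne_zero (hcoeffN ▸ hvand))
  have hsplit : wap A lam = Polynomial.C (vand lam)⁻¹ *
      (wronskian (plen lam) fun i => A (degv lam i)) := by
    rw [wap, Polynomial.smul_eq_C_mul]
  have hlead : (wronskian (plen lam) fun i => A (degv lam i)).leadingCoeff = vand lam := by
    rw [Polynomial.leadingCoeff, Polynomial.natDegree_eq_of_degree_eq_some hPdeg, hcoeffN]
  constructor
  · show (wap A lam).leadingCoeff = 1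
    rw [hsplit, Polynomial.leadingCoeff_mul, Polynomial.leadingCoeff_C, hlead,
      inv_mul_cancel₀ hvand]
  · rw [hsplit, Polynomial.degree_mul, Polynomial.degree_C (inv_ne_zero hvand), hPdeg, zero_add]
end
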